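/- arXiv:1608.00870 — 2 statements merged into one kernel-verified Lean document; each statement's English description precedes it below -/
import Mathlib

section
/- The map term : C*_Lb → C_Lb, sending a causal graph G to the product ∏_{(v1,v2) ∈ G} v1·v2, is an isomorphism between the algebras ⟨C*_Lb, *, ·, ∅, ⊆⟩ and ⟨C_Lb, *, ·, 1, ≤⟩; that is, term is a bijection satisfying term(∅) = 1, term(G * G') = term(G) * term(G'), term(G · G') = term(G) · term(G'), and G ⊆ G' if and only if term(G') ≤ term(G), for all causal graphs G, G'. -/
/-!  Causal values (Cabalar–Fandinno, causal stable models for disjunctive programs).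

Causal values are the equivalence classes of terms (built from labels in `Lb` by possibly
infinite products `∏`, possibly infinite sums `∑` and application `·`) under the axioms of a
completely distributive complete lattice (meet `*` = `⊓`/`sInf`, join `+` = `⊔`/`sSup`,
`1` = `⊤` the empty product, `0` = `⊥` the empty sum) together with the axioms for
application listed in the paper.  We formalize "the algebra of causal values `V_Lb`" as a
causal algebra (a completely distributive complete lattice with the extra operations
satisfying the axioms) that is free/initial, i.e. a quotient of the term algebra by exactly
the equational theory generated by the axioms. -/

open scoped Classical

namespace Causal

/-- The extra operations of a causal algebra: application `·` and label constants. -/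
class CausalOps (Lb : Type) (V : Type) where
  capp : V → V → V
  clabel : Lb → V

/-- Application `t · u`. -/
def capp (Lb : Type) {V : Type} [CausalOps Lb V] (t u : V) : V :=
  CausalOps.capp (Lb := Lb) t u

/-- The value of a label. -/
def clabel (Lb V : Type) [CausalOps Lb V] (l : Lb) : V :=
  CausalOps.clabel l

/-- The causes `C_Lb`: values with a representative term without addition, i.e. the closure
of the labels under (possibly infinite, possibly empty) products and application. -/
inductive IsCause (Lb : Type) {V : Type} [CompletelyDistribLattice V] [CausalOps Lb V] : V → Prop
  | label (l : Lb) : IsCause Lb (clabel Lb V l)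
  | inf (S : Set V) (h : ∀ v ∈ S, IsCause Lb v) : IsCause Lb (sInf S)
  | app (t u : V) (ht : IsCause Lb t) (hu : IsCause Lb u) : IsCause Lb (capp Lb t u)

/-- The axioms of a causal algebra (Figure 1 of the paper), on top of a completely
distributive complete lattice.  Here `*` is `⊓`, `+` is `⊔`, `1 = ⊤`, `0 = ⊥`. -/
class CausalAlgebra (Lb : Type) (V : Type) [CompletelyDistribLattice V] [CausalOps Lb V] :
    Prop where
  capp_assoc : ∀ t u w : V, capp Lb t (capp Lb u w) = capp Lb (capp Lb t u) w
  absorb_sup : ∀ t u w : V, t ⊔ capp Lb (capp Lb u t) w = t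
  absorb_inf : ∀ t u w : V, t ⊓ capp Lb (capp Lb u t) w = capp Lb (capp Lb u t) w
  top_capp : ∀ t : V, capp Lb ⊤ t = t
  capp_top : ∀ t : V, capp Lb t ⊤ = t
  capp_bot : ∀ t : V, capp Lb t ⊥ = ⊥
  bot_capp : ∀ t : V, capp Lb ⊥ t = ⊥
  label_idem : ∀ l : Lb, capp Lb (clabel Lb V l) (clabel Lb V l) = clabel Lb V l
  capp_sSup : ∀ (t : V) (S : Set V), capp Lb t (sSup S) = ⨆ u ∈ S, capp Lb t u
  sSup_capp : ∀ (S : Set V) (t : V), capp Lb (sSup S) t = ⨆ u ∈ S, capp Lb u t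
  cause_capp_capp : ∀ c d e : V, IsCause Lb c → IsCause Lb d → IsCause Lb e → d ≠ ⊤ →
    capp Lb (capp Lb c d) e = capp Lb c d ⊓ capp Lb d e
  cause_capp_inf : ∀ c d e : V, IsCause Lb c → IsCause Lb d → IsCause Lb e →
    capp Lb c (d ⊓ e) = capp Lb c d ⊓ capp Lb c e
  cause_inf_capp : ∀ c d e : V, IsCause Lb c → IsCause Lb d → IsCause Lb e →
    capp Lb (c ⊓ d) e = capp Lb c e ⊓ capp Lb d e
  cause_capp_sInf : ∀ (c : V) (S : Set V), IsCause Lb c → (∀ d ∈ S, IsCause Lb d) →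
    S.Nonempty → capp Lb c (sInf S) = ⨅ d ∈ S, capp Lb c d
  cause_sInf_capp : ∀ (S : Set V) (e : V), (∀ d ∈ S, IsCause Lb d) → IsCause Lb e →
    S.Nonempty → capp Lb (sInf S) e = ⨅ d ∈ S, capp Lb d e

/-- Homomorphisms of causal algebras preserve sums, products, application and labels. -/
def IsCausalHom (Lb : Type) {V W : Type} [CompletelyDistribLattice V] [CausalOps Lb V]
    [CompletelyDistribLattice W] [CausalOps Lb W] (h : V → W) : Prop :=
  (∀ S : Set V, h (sSup S) = sSup (h '' S)) ∧
  (∀ S : Set V, h (sInf S) = sInf (h '' S)) ∧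
  (∀ t u : V, h (capp Lb t u) = capp Lb (h t) (h u)) ∧
  (∀ l : Lb, h (clabel Lb V l) = clabel Lb W l)

/-- `V` is (a copy of) the algebra `V_Lb` of causal values over the labels `Lb`:
the free (initial) causal algebra over `Lb`, i.e. the quotient of the term algebra by the
equational theory generated by the axioms. -/
class IsValueAlgebra (Lb : Type) (V : Type) [CompletelyDistribLattice V] [CausalOps Lb V] :
    Prop where
  alg : CausalAlgebra Lb V
  free : ∀ (W : Type) [CompletelyDistribLattice W] [CausalOps Lb W],
    CausalAlgebra Lb W → ∃! h : V → W, IsCausalHom Lb h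

/-! ### Labelled logic programs over a signature `⟨At, Lb⟩` with `At ⊆ Lb`. -/

/-- A labelled rule
`r : A₁ ∨ … ∨ A_m ∨ not A_{m+1} ∨ … ∨ not A_n ← B₁, …, B_k, not B_{k+1}, …, not B_l`
with all head/body atoms in `At`. -/
structure LRule (Lb : Type) (At : Set Lb) where
  lbl : Lb
  hpos : Finset Lb
  hneg : Finset Lb
  bpos : Finset Lb
  bneg : Finset Lb
  hpos_sub : ∀ a ∈ hpos, a ∈ At
  hneg_sub : ∀ a ∈ hneg, a ∈ At
  bpos_sub : ∀ a ∈ bpos, a ∈ At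
  bneg_sub : ∀ a ∈ bneg, a ∈ At

variable {Lb V : Type} {At : Set Lb}

/-- The positive head, as a set of atoms. -/
def LRule.hposA (r : LRule Lb At) : Set ↥At := {a | (a : Lb) ∈ r.hpos}
/-- The negative head, as a set of atoms. -/
def LRule.hnegA (r : LRule Lb At) : Set ↥At := {a | (a : Lb) ∈ r.hneg}
/-- The positive body, as a set of atoms. -/
def LRule.bposA (r : LRule Lb At) : Set ↥At := {a | (a : Lb) ∈ r.bpos}
/-- The negative body, as a set of atoms. -/
def LRule.bnegA (r : LRule Lb At) : Set ↥At := {a | (a : Lb) ∈ r.bneg}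

/-- A rule is positive iff it contains no negative literals. -/
def LRule.isPositive (r : LRule Lb At) : Prop := r.hneg = ∅ ∧ r.bneg = ∅

/-- A program is positive iff all its rules are. -/
def PositiveProg (P : Set (LRule Lb At)) : Prop := ∀ r ∈ P, r.isPositive

section Sem

variable [CompletelyDistribLattice V] [CausalOps Lb V]

/-- The value `I(not A)` of a negative literal: `1` if `I(A) = 0` and `0` otherwise. -/
noncomputable def nval (v : V) : V := if v = ⊥ then ⊤ else ⊥

/-- The value of the body of a rule under an interpretation `I : At → V_Lb`:
`I(B₁) * … * I(B_k) * I(not B_{k+1}) * … * I(not B_l)`. -/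
noncomputable def bodyVal (I : ↥At → V) (r : LRule Lb At) : V :=
  (⨅ a ∈ r.bposA, I a) ⊓ (⨅ a ∈ r.bnegA, nval (I a))

/-- `I` satisfies a rule `r` iff `(body value) · r_lbl · A_j ≤ I(L_j)` for some head literal
`L_j` with atom `A_j`. -/
noncomputable def Satisfies (I : ↥At → V) (r : LRule Lb At) : Prop :=
  (∃ a ∈ r.hposA,
      capp Lb (capp Lb (bodyVal I r) (clabel Lb V r.lbl)) (clabel Lb V (a : Lb)) ≤ I a) ∨
  (∃ a ∈ r.hnegA,
      capp Lb (capp Lb (bodyVal I r) (clabel Lb V r.lbl)) (clabel Lb V (a : Lb)) ≤ nval (I a))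

/-- `I ⊨ P`. -/
noncomputable def Models (I : ↥At → V) (P : Set (LRule Lb At)) : Prop := ∀ r ∈ P, Satisfies I r

/-- `I` is standard (two-valued) iff it maps each atom to `{0, 1}`. -/
def IsStandard (I : ↥At → V) : Prop := ∀ a, I a = ⊥ ∨ I a = ⊤

/-- `Atoms(I) = { A ∈ At | I(A) ≠ 0 }`. -/
def AtomsOf (I : ↥At → V) : Set ↥At := {a | I a ≠ ⊥}

/-- The standard interpretation `I^st` associated to `I`. -/
noncomputable def Ist (I : ↥At → V) : ↥At → V := fun a => if I a = ⊥ then ⊥ else ⊤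

/-- `I ≤ J` iff `I(A) ≤ J(A)` for every atom `A`. -/
def ile (I J : ↥At → V) : Prop := ∀ a, I a ≤ J a

/-- `I ≼ J` iff `I ≤ J` or `Atoms(I) ⊊ Atoms(J)`. -/
def iwle (I J : ↥At → V) : Prop := ile I J ∨ AtomsOf I ⊂ AtomsOf J

/-- `I` is a causal stable model of a positive program `P` iff it is a `≼`-minimal
model of `P`. -/
noncomputable def CausalStablePos (P : Set (LRule Lb At)) (I : ↥At → V) : Prop :=
  Models I P ∧ ∀ J : ↥At → V, Models J P → iwle J I → J = I

/-- `I` is a standard stable model of a positive program `P` iff it is a `≼`-minimal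
standard model of `P`. -/
noncomputable def StdStablePos (P : Set (LRule Lb At)) (I : ↥At → V) : Prop :=
  IsStandard I ∧ Models I P ∧
    ∀ J : ↥At → V, IsStandard J → Models J P → iwle J I → J = I

end Sem

/-- `S ⊆ At` is closed under `P`. -/
def ClosedUnder (P : Set (LRule Lb At)) (S : Set ↥At) : Prop :=
  ∀ r ∈ P, r.bposA ∪ r.hnegA ⊆ S → (∀ a ∈ r.bnegA, a ∉ S) → ∃ a ∈ r.hposA, a ∈ S

/-- The result of deleting all negative literals of a rule. -/
def LRule.strip (r : LRule Lb At) : LRule Lb At :=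
  ⟨r.lbl, r.hpos, ∅, r.bpos, ∅, r.hpos_sub,
    fun a ha => absurd ha (Finset.notMem_empty a),
    r.bpos_sub, fun a ha => absurd ha (Finset.notMem_empty a)⟩

/-- The GL-reduct `P^S` of `P` w.r.t. a set of atoms `S`. -/
def glReduct (P : Set (LRule Lb At)) (S : Set ↥At) : Set (LRule Lb At) :=
  { r' | ∃ r ∈ P, (∀ a ∈ r.bnegA, a ∉ S) ∧ (∀ a ∈ r.hnegA, a ∈ S) ∧ r' = r.strip }

/-- `S` is a GL-stable model of `P` iff `S` is `⊆`-minimal among the sets closed under the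
positive program `P^S`. -/
def GLStable (P : Set (LRule Lb At)) (S : Set ↥At) : Prop :=
  ClosedUnder (glReduct P S) S ∧ ∀ S' ⊆ S, ClosedUnder (glReduct P S) S' → S' = S

section Sem2

variable [CompletelyDistribLattice V] [CausalOps Lb V]

/-- The causal reduct `P^I` of `P` w.r.t. an interpretation `I`. -/
def causalReduct (P : Set (LRule Lb At)) (I : ↥At → V) : Set (LRule Lb At) :=
  { r' | ∃ r ∈ P, (∀ a ∈ r.bnegA, I a = ⊥) ∧ (∀ a ∈ r.hnegA, I a ≠ ⊥) ∧ r' = r.strip }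

/-- `I` is a causal stable model of `P` iff `I` is a causal stable model of the positive
program `P^I`. -/
noncomputable def CausalStable (P : Set (LRule Lb At)) (I : ↥At → V) : Prop :=
  CausalStablePos (causalReduct P I) I

/-- A standard interpretation `J` is a standard stable model of `P` iff `J` is a standard
stable model of the positive program `P^J`. -/
noncomputable def StdStable (P : Set (LRule Lb At)) (I : ↥At → V) : Prop :=
  StdStablePos (causalReduct P I) I

end Sem2

end Causal

namespace Causal

/-- The transitive closure of a set of edges. -/
def transCl {Lb : Type} (E : Set (Lb × Lb)) : Set (Lb × Lb) :=
  {p | Relation.TransGen (fun a b => (a, b) ∈ E) p.1 p.2}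

/-- A causal graph: a set of edges over `Lb`, reflexively and transitively closed. -/
def IsCGraph {Lb : Type} (G : Set (Lb × Lb)) : Prop :=
  (∀ v w : Lb, (v, w) ∈ G → (v, v) ∈ G ∧ (w, w) ∈ G) ∧
  (∀ u v w : Lb, (u, v) ∈ G → (v, w) ∈ G → (u, w) ∈ G)

/-- The application `G · G'` of causal graphs: the transitive closure of
`G ∪ G' ∪ {(v,v') | (v,v) ∈ G and (v',v') ∈ G'}`. -/
def gApp {Lb : Type} (G G' : Set (Lb × Lb)) : Set (Lb × Lb) :=
  transCl (G ∪ G' ∪ {p | (p.1, p.1) ∈ G ∧ (p.2, p.2) ∈ G'})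

/-- `term(G) = ∏_{(v₁,v₂) ∈ G} v₁ · v₂`. -/
def termV (Lb V : Type) [CompletelyDistribLattice V] [CausalOps Lb V]
    (G : Set (Lb × Lb)) : V :=
  sInf ((fun p : Lb × Lb => capp Lb (clabel Lb V p.1) (clabel Lb V p.2)) '' G)

/-! ### Auxiliary development -/

variable {Lb : Type}

lemma subset_transCl (E : Set (Lb × Lb)) : E ⊆ transCl E := by
  rintro ⟨a, b⟩ h
  exact Relation.TransGen.single h

lemma transCl_trans {E : Set (Lb × Lb)} {a b c : Lb} (h1 : (a, b) ∈ transCl E)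
    (h2 : (b, c) ∈ transCl E) : (a, c) ∈ transCl E :=
  Relation.TransGen.trans h1 h2

lemma transCl_subset_of_trans {E F : Set (Lb × Lb)} (hEF : E ⊆ F)
    (hF : ∀ a b c : Lb, (a, b) ∈ F → (b, c) ∈ F → (a, c) ∈ F) : transCl E ⊆ F := by
  rintro ⟨a, b⟩ h
  simp only [transCl, Set.mem_setOf_eq] at h
  induction h with
  | single h => exact hEF h
  | tail _ h ih => exact hF _ _ _ ih (hEF h)

lemma transCl_mono {E F : Set (Lb × Lb)} (h : E ⊆ F) : transCl E ⊆ transCl F :=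
  transCl_subset_of_trans (fun p hp => subset_transCl F (h hp))
    (fun _ _ _ => transCl_trans)

lemma transCl_subset_transCl {E F : Set (Lb × Lb)} (h : E ⊆ transCl F) :
    transCl E ⊆ transCl F :=
  transCl_subset_of_trans h (fun _ _ _ => transCl_trans)

lemma transCl_congr {E F : Set (Lb × Lb)} (h1 : E ⊆ transCl F) (h2 : F ⊆ transCl E) :
    transCl E = transCl F :=
  Set.Subset.antisymm (transCl_subset_transCl h1) (transCl_subset_transCl h2)

lemma transCl_of_trans {E : Set (Lb × Lb)}
    (hE : ∀ a b c : Lb, (a, b) ∈ E → (b, c) ∈ E → (a, c) ∈ E) : transCl E = E :=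
  Set.Subset.antisymm (transCl_subset_of_trans (fun _ h => h) hE) (subset_transCl E)

lemma transCl_endpoints {E : Set (Lb × Lb)} {Q : Lb → Prop}
    (hQ : ∀ p ∈ E, Q p.1 ∧ Q p.2) {a b : Lb} (h : (a, b) ∈ transCl E) : Q a ∧ Q b := by
  simp only [transCl, Set.mem_setOf_eq] at h
  induction h with
  | single h => exact hQ _ h
  | tail _ h ih => exact ⟨ih.1, (hQ _ h).2⟩

/-- cross edges -/
def bset (G G' : Set (Lb × Lb)) : Set (Lb × Lb) := {p | (p.1, p.1) ∈ G ∧ (p.2, p.2) ∈ G'}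

def eset (G G' : Set (Lb × Lb)) : Set (Lb × Lb) := G ∪ G' ∪ bset G G'

lemma gApp_def (G G' : Set (Lb × Lb)) : gApp G G' = transCl (eset G G') := rfl

lemma IsCGraph.empty : IsCGraph (∅ : Set (Lb × Lb)) :=
  ⟨fun _ _ h => h.elim, fun _ _ _ h => h.elim⟩

lemma isCGraph_transCl {E : Set (Lb × Lb)}
    (h : ∀ p ∈ E, (p.1, p.1) ∈ E ∧ (p.2, p.2) ∈ E) : IsCGraph (transCl E) := by
  refine ⟨?_, fun _ _ _ => transCl_trans⟩
  intro v w hvw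
  have h2 := transCl_endpoints (Q := fun x => (x, x) ∈ E) h hvw
  exact ⟨subset_transCl E h2.1, subset_transCl E h2.2⟩

lemma eset_loops {G G' : Set (Lb × Lb)} (hG : IsCGraph G) (hG' : IsCGraph G') :
    ∀ p ∈ eset G G', (p.1, p.1) ∈ eset G G' ∧ (p.2, p.2) ∈ eset G G' := by
  rintro ⟨a, b⟩ ((h | h) | h)
  · exact ⟨Or.inl (Or.inl (hG.1 _ _ h).1), Or.inl (Or.inl (hG.1 _ _ h).2)⟩
  · exact ⟨Or.inl (Or.inr (hG'.1 _ _ h).1), Or.inl (Or.inr (hG'.1 _ _ h).2)⟩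
  · exact ⟨Or.inl (Or.inl h.1), Or.inl (Or.inr h.2)⟩

lemma isCGraph_gApp {G G' : Set (Lb × Lb)} (hG : IsCGraph G) (hG' : IsCGraph G') :
    IsCGraph (gApp G G') :=
  isCGraph_transCl (eset_loops hG hG')

lemma loops_gApp {G G' : Set (Lb × Lb)} (hG : IsCGraph G) (hG' : IsCGraph G') {x : Lb} :
    (x, x) ∈ gApp G G' ↔ (x, x) ∈ G ∨ (x, x) ∈ G' := by
  constructor
  · intro h
    refine (transCl_endpoints (Q := fun v => (v, v) ∈ G ∨ (v, v) ∈ G') ?_ h).1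
    rintro ⟨a, b⟩ ((h | h) | h)
    · exact ⟨Or.inl (hG.1 _ _ h).1, Or.inl (hG.1 _ _ h).2⟩
    · exact ⟨Or.inr (hG'.1 _ _ h).1, Or.inr (hG'.1 _ _ h).2⟩
    · exact ⟨Or.inl h.1, Or.inr h.2⟩
  · rintro (h | h)
    · exact subset_transCl _ (Or.inl (Or.inl h))
    · exact subset_transCl _ (Or.inl (Or.inr h))

lemma loops_transCl_iUnion {ι : Sort*} {D : ι → Set (Lb × Lb)}
    (hD : ∀ i, IsCGraph (D i)) {x : Lb} :
    (x, x) ∈ transCl (⋃ i, D i) ↔ ∃ i, (x, x) ∈ D i := by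
  constructor
  · intro h
    refine (transCl_endpoints (Q := fun v => ∃ i, (v, v) ∈ D i) ?_ h).1
    rintro ⟨a, b⟩ hp
    obtain ⟨i, hi⟩ := Set.mem_iUnion.1 hp
    exact ⟨⟨i, ((hD i).1 _ _ hi).1⟩, ⟨i, ((hD i).1 _ _ hi).2⟩⟩
  · rintro ⟨i, h⟩
    exact subset_transCl _ (Set.mem_iUnion.2 ⟨i, h⟩)

lemma isCGraph_transCl_iUnion {ι : Sort*} {D : ι → Set (Lb × Lb)}
    (hD : ∀ i, IsCGraph (D i)) : IsCGraph (transCl (⋃ i, D i)) := by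
  refine isCGraph_transCl ?_
  rintro ⟨a, b⟩ hp
  obtain ⟨i, hi⟩ := Set.mem_iUnion.1 hp
  exact ⟨Set.mem_iUnion.2 ⟨i, ((hD i).1 _ _ hi).1⟩, Set.mem_iUnion.2 ⟨i, ((hD i).1 _ _ hi).2⟩⟩

lemma transCl_union3_left (A B C : Set (Lb × Lb)) :
    transCl (transCl A ∪ B ∪ C) = transCl (A ∪ B ∪ C) := by
  refine transCl_congr ?_ ?_
  · rintro p ((hp | hp) | hp)
    · exact transCl_mono (fun q hq => Or.inl (Or.inl hq)) hp
    · exact subset_transCl _ (Or.inl (Or.inr hp))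
    · exact subset_transCl _ (Or.inr hp)
  · rintro p ((hp | hp) | hp)
    · exact subset_transCl _ (Or.inl (Or.inl (subset_transCl _ hp)))
    · exact subset_transCl _ (Or.inl (Or.inr hp))
    · exact subset_transCl _ (Or.inr hp)

lemma transCl_union3_mid (A B C : Set (Lb × Lb)) :
    transCl (A ∪ transCl B ∪ C) = transCl (A ∪ B ∪ C) := by
  refine transCl_congr ?_ ?_
  · rintro p ((hp | hp) | hp)
    · exact subset_transCl _ (Or.inl (Or.inl hp))
    · exact transCl_mono (fun q hq => Or.inl (Or.inr hq)) hp
    · exact subset_transCl _ (Or.inr hp)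
  · rintro p ((hp | hp) | hp)
    · exact subset_transCl _ (Or.inl (Or.inl hp))
    · exact subset_transCl _ (Or.inl (Or.inr (subset_transCl _ hp)))
    · exact subset_transCl _ (Or.inr hp)

lemma transCl_union_transCl (A B : Set (Lb × Lb)) :
    transCl (transCl A ∪ transCl B) = transCl (A ∪ B) := by
  refine transCl_congr ?_ ?_
  · rintro p (hp | hp)
    · exact transCl_mono Set.subset_union_left hp
    · exact transCl_mono Set.subset_union_right hp
  · rintro p (hp | hp)
    · exact subset_transCl _ (Or.inl (subset_transCl _ hp))
    · exact subset_transCl _ (Or.inr (subset_transCl _ hp))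

lemma transCl_iUnion_transCl {ι : Sort*} (F : ι → Set (Lb × Lb)) :
    transCl (⋃ i, transCl (F i)) = transCl (⋃ i, F i) := by
  refine transCl_congr ?_ ?_
  · rintro p hp
    obtain ⟨i, hi⟩ := Set.mem_iUnion.1 hp
    exact transCl_mono (fun q hq => Set.mem_iUnion.2 ⟨i, hq⟩) hi
  · rintro p hp
    obtain ⟨i, hi⟩ := Set.mem_iUnion.1 hp
    exact subset_transCl _ (Set.mem_iUnion.2 ⟨i, subset_transCl _ hi⟩)

lemma bset_gApp_right {G G' : Set (Lb × Lb)} (hG : IsCGraph G) (hG' : IsCGraph G')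
    (G'' : Set (Lb × Lb)) :
    bset (gApp G G') G'' = bset G G'' ∪ bset G' G'' := by
  ext ⟨a, b⟩
  simp only [bset, Set.mem_setOf_eq, Set.mem_union, loops_gApp hG hG']
  tauto

lemma bset_gApp_left (G : Set (Lb × Lb)) {G' G'' : Set (Lb × Lb)}
    (hG' : IsCGraph G') (hG'' : IsCGraph G'') :
    bset G (gApp G' G'') = bset G G' ∪ bset G G'' := by
  ext ⟨a, b⟩
  simp only [bset, Set.mem_setOf_eq, Set.mem_union, loops_gApp hG' hG'']
  tauto

lemma gApp_assoc {G G' G'' : Set (Lb × Lb)} (hG : IsCGraph G) (hG' : IsCGraph G')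
    (hG'' : IsCGraph G'') :
    gApp (gApp G G') G'' = gApp G (gApp G' G'') := by
  rw [gApp_def (gApp G G') G'', gApp_def G (gApp G' G'')]
  show transCl (gApp G G' ∪ G'' ∪ bset (gApp G G') G'') =
    transCl (G ∪ gApp G' G'' ∪ bset G (gApp G' G''))
  rw [bset_gApp_right hG hG', bset_gApp_left G hG' hG'', gApp_def G G', gApp_def G' G'',
    transCl_union3_left, transCl_union3_mid]
  refine congrArg transCl ?_
  ext p
  simp only [eset, Set.mem_union]
  tauto

lemma gApp_gApp_cc {G G' G'' : Set (Lb × Lb)} (hG : IsCGraph G) (hG' : IsCGraph G')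
    (hG'' : IsCGraph G'') (hne : G'.Nonempty) :
    gApp (gApp G G') G'' = transCl (gApp G G' ∪ gApp G' G'') := by
  have hR : transCl (gApp G G' ∪ gApp G' G'') = transCl (eset G G' ∪ eset G' G'') := by
    rw [gApp_def G G', gApp_def G' G'', transCl_union_transCl]
  rw [hR, gApp_def (gApp G G') G'']
  show transCl (gApp G G' ∪ G'' ∪ bset (gApp G G') G'') = _
  rw [bset_gApp_right hG hG', gApp_def G G', transCl_union3_left]
  refine transCl_congr ?_ ?_
  · rintro ⟨a, b⟩ ((hp | hp) | (hp | hp))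
    · exact subset_transCl _ (Or.inl hp)
    · exact subset_transCl _ (Or.inr (Or.inl (Or.inr hp)))
    · -- hp : (a,a) ∈ G ∧ (b,b) ∈ G''
      obtain ⟨⟨x, y⟩, hxy⟩ := hne
      have hx : (x, x) ∈ G' := (hG'.1 _ _ hxy).1
      refine Relation.TransGen.tail (b := x) (Relation.TransGen.single ?_) ?_
      · exact Or.inl (Or.inr ⟨hp.1, hx⟩)
      · exact Or.inr (Or.inr ⟨hx, hp.2⟩)
    · exact subset_transCl _ (Or.inr (Or.inr hp))
  · rintro ⟨a, b⟩ (((hp | hp) | hp) | ((hp | hp) | hp))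
    · exact subset_transCl _ (Or.inl (Or.inl (Or.inl (Or.inl hp))))
    · exact subset_transCl _ (Or.inl (Or.inl (Or.inl (Or.inr hp))))
    · exact subset_transCl _ (Or.inl (Or.inl (Or.inr hp)))
    · exact subset_transCl _ (Or.inl (Or.inl (Or.inl (Or.inr hp))))
    · exact subset_transCl _ (Or.inl (Or.inr hp))
    · exact subset_transCl _ (Or.inr (Or.inr hp))

lemma gApp_transCl_iUnion_right {ι : Type} [Nonempty ι] {G : Set (Lb × Lb)}
    {D : ι → Set (Lb × Lb)} (hG : IsCGraph G) (hD : ∀ i, IsCGraph (D i)) :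
    gApp G (transCl (⋃ i, D i)) = transCl (⋃ i, gApp G (D i)) := by
  have hb : bset G (transCl (⋃ i, D i)) = ⋃ i, bset G (D i) := by
    ext ⟨a, b⟩
    simp only [bset, Set.mem_setOf_eq, Set.mem_iUnion, loops_transCl_iUnion hD]
    tauto
  rw [gApp_def]
  show transCl (G ∪ transCl (⋃ i, D i) ∪ bset G (transCl (⋃ i, D i))) = _
  rw [hb, transCl_union3_mid]
  have hrfl : (⋃ i, gApp G (D i)) = ⋃ i, transCl (eset G (D i)) := rfl
  rw [hrfl, transCl_iUnion_transCl]
  refine congrArg transCl ?_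
  ext ⟨a, b⟩
  simp only [Set.mem_union, Set.mem_iUnion, eset]
  constructor
  · rintro ((h | ⟨i, h⟩) | ⟨i, h⟩)
    · obtain ⟨i⟩ := ‹Nonempty ι›
      exact ⟨i, Or.inl (Or.inl h)⟩
    · exact ⟨i, Or.inl (Or.inr h)⟩
    · exact ⟨i, Or.inr h⟩
  · rintro ⟨i, ((h | h) | h)⟩
    · exact Or.inl (Or.inl h)
    · exact Or.inl (Or.inr ⟨i, h⟩)
    · exact Or.inr ⟨i, h⟩

lemma gApp_transCl_iUnion_left {ι : Type} [Nonempty ι] {G : Set (Lb × Lb)}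
    {D : ι → Set (Lb × Lb)} (hG : IsCGraph G) (hD : ∀ i, IsCGraph (D i)) :
    gApp (transCl (⋃ i, D i)) G = transCl (⋃ i, gApp (D i) G) := by
  have hb : bset (transCl (⋃ i, D i)) G = ⋃ i, bset (D i) G := by
    ext ⟨a, b⟩
    simp only [bset, Set.mem_setOf_eq, Set.mem_iUnion, loops_transCl_iUnion hD]
    tauto
  rw [gApp_def]
  show transCl (transCl (⋃ i, D i) ∪ G ∪ bset (transCl (⋃ i, D i)) G) = _
  rw [hb, transCl_union3_left]
  have hrfl : (⋃ i, gApp (D i) G) = ⋃ i, transCl (eset (D i) G) := rfl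
  rw [hrfl, transCl_iUnion_transCl]
  refine congrArg transCl ?_
  ext ⟨a, b⟩
  simp only [Set.mem_union, Set.mem_iUnion, eset]
  constructor
  · rintro ((⟨i, h⟩ | h) | ⟨i, h⟩)
    · exact ⟨i, Or.inl (Or.inl h)⟩
    · obtain ⟨i⟩ := ‹Nonempty ι›
      exact ⟨i, Or.inl (Or.inr h)⟩
    · exact ⟨i, Or.inr h⟩
  · rintro ⟨i, ((h | h) | h)⟩
    · exact Or.inl (Or.inl ⟨i, h⟩)
    · exact Or.inl (Or.inr h)
    · exact Or.inr ⟨i, h⟩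

lemma gApp_transCl_union_right {G D E : Set (Lb × Lb)} (hG : IsCGraph G)
    (hD : IsCGraph D) (hE : IsCGraph E) :
    gApp G (transCl (D ∪ E)) = transCl (gApp G D ∪ gApp G E) := by
  have h1 : D ∪ E = ⋃ b : Bool, (bif b then D else E) := by
    ext p; simp only [Set.mem_iUnion, Bool.exists_bool, Set.mem_union, cond_true, cond_false]
    tauto
  have h2 : ∀ b : Bool, IsCGraph (bif b then D else E) := by
    intro b; cases b <;> simpa
  rw [h1, gApp_transCl_iUnion_right hG h2]
  refine congrArg transCl ?_
  ext p; simp only [Set.mem_iUnion, Bool.exists_bool, Set.mem_union, cond_true, cond_false]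
  tauto

lemma gApp_transCl_union_left {G D E : Set (Lb × Lb)} (hG : IsCGraph G)
    (hD : IsCGraph D) (hE : IsCGraph E) :
    gApp (transCl (D ∪ E)) G = transCl (gApp D G ∪ gApp E G) := by
  have h1 : D ∪ E = ⋃ b : Bool, (bif b then D else E) := by
    ext p; simp only [Set.mem_iUnion, Bool.exists_bool, Set.mem_union, cond_true, cond_false]
    tauto
  have h2 : ∀ b : Bool, IsCGraph (bif b then D else E) := by
    intro b; cases b <;> simpa
  rw [h1, gApp_transCl_iUnion_left hG h2]
  refine congrArg transCl ?_
  ext p; simp only [Set.mem_iUnion, Bool.exists_bool, Set.mem_union, cond_true, cond_false]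
  tauto

lemma gApp_empty_left {G : Set (Lb × Lb)} (hG : IsCGraph G) : gApp ∅ G = G := by
  rw [gApp_def]
  have : eset (∅ : Set (Lb × Lb)) G = G := by
    ext p; simp [eset, bset]
  rw [this, transCl_of_trans hG.2]

lemma gApp_empty_right {G : Set (Lb × Lb)} (hG : IsCGraph G) : gApp G ∅ = G := by
  rw [gApp_def]
  have : eset G (∅ : Set (Lb × Lb)) = G := by
    ext p; simp [eset, bset]
  rw [this, transCl_of_trans hG.2]

lemma gApp_mono {G₁ G₂ G₁' G₂' : Set (Lb × Lb)} (h : G₁ ⊆ G₂) (h' : G₁' ⊆ G₂') :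
    gApp G₁ G₁' ⊆ gApp G₂ G₂' := by
  refine transCl_mono ?_
  rintro ⟨a, b⟩ ((hp | hp) | hp)
  · exact Or.inl (Or.inl (h hp))
  · exact Or.inl (Or.inr (h' hp))
  · exact Or.inr ⟨h hp.1, h' hp.2⟩

def ptG (l : Lb) : Set (Lb × Lb) := {(l, l)}

lemma isCGraph_ptG (l : Lb) : IsCGraph (ptG l) := by
  constructor
  · rintro v w h
    simp only [ptG, Set.mem_singleton_iff, Prod.mk.injEq] at h
    obtain ⟨rfl, rfl⟩ := h
    simp [ptG]
  · intro x y z h1 h2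
    simp only [ptG, Set.mem_singleton_iff, Prod.mk.injEq] at *
    exact ⟨h1.1, h2.2⟩

def edgeS (a b : Lb) : Set (Lb × Lb) := {(a, a), (b, b), (a, b)}

lemma isCGraph_edgeS (a b : Lb) : IsCGraph (edgeS a b) := by
  constructor
  · intro v w h
    simp only [edgeS, Set.mem_insert_iff, Set.mem_singleton_iff, Prod.mk.injEq] at *
    rcases h with ⟨rfl, rfl⟩ | ⟨rfl, rfl⟩ | ⟨rfl, rfl⟩ <;> tauto
  · intro x y z h1 h2
    simp only [edgeS, Set.mem_insert_iff, Set.mem_singleton_iff, Prod.mk.injEq] at *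
    rcases h1 with ⟨e1, e2⟩ | ⟨e1, e2⟩ | ⟨e1, e2⟩ <;>
      rcases h2 with ⟨f1, f2⟩ | ⟨f1, f2⟩ | ⟨f1, f2⟩ <;> subst_vars <;> tauto

lemma gApp_ptG (a b : Lb) : gApp (ptG a) (ptG b) = edgeS a b := by
  rw [gApp_def]
  have h : eset (ptG a) (ptG b) = edgeS a b := by
    ext ⟨x, y⟩
    simp only [eset, bset, ptG, edgeS, Set.mem_union, Set.mem_singleton_iff,
      Set.mem_insert_iff, Set.mem_setOf_eq, Prod.mk.injEq]
    tauto
  rw [h, transCl_of_trans (isCGraph_edgeS a b).2]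

lemma edgeS_subset {G : Set (Lb × Lb)} (hG : IsCGraph G) {a b : Lb} (h : (a, b) ∈ G) :
    edgeS a b ⊆ G := by
  rintro ⟨x, y⟩ hp
  simp only [edgeS, Set.mem_insert_iff, Set.mem_singleton_iff, Prod.mk.injEq] at hp
  rcases hp with ⟨rfl, rfl⟩ | ⟨rfl, rfl⟩ | ⟨rfl, rfl⟩
  · exact (hG.1 _ _ h).1
  · exact (hG.1 _ _ h).2
  · exact h

lemma transCl_iUnion_edgeS {G : Set (Lb × Lb)} (hG : IsCGraph G) :
    transCl (⋃ p : G, edgeS p.1.1 p.1.2) = G := by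
  have h1 : (⋃ p : G, edgeS p.1.1 p.1.2) = G := by
    apply Set.Subset.antisymm
    · refine Set.iUnion_subset fun p => ?_
      have := edgeS_subset hG (a := p.1.1) (b := p.1.2) (by simpa using p.2)
      simpa using this
    · rintro ⟨a, b⟩ hq
      refine Set.mem_iUnion.2 ⟨⟨(a, b), hq⟩, ?_⟩
      simp [edgeS]
  rw [h1, transCl_of_trans hG.2]


/-! ### The causal-graph model -/

def CGraph (Lb : Type) : Type := {G : Set (Lb × Lb) // IsCGraph G}

instance : PartialOrder (CGraph Lb) where
  le G H := H.1 ⊆ G.1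
  le_refl G := subset_rfl
  le_trans a b c h1 h2 := Set.Subset.trans h2 h1
  le_antisymm a b h1 h2 := Subtype.ext (Set.Subset.antisymm h2 h1)

lemma CGraph.le_iff {A B : CGraph Lb} : A ≤ B ↔ B.1 ⊆ A.1 := Iff.rfl

abbrev GWorld (Lb : Type) := LowerSet (CGraph Lb)

instance : CausalOps Lb (GWorld Lb) where
  capp U U' := ⟨{K | ∃ G ∈ U, ∃ G' ∈ U', gApp G.1 G'.1 ⊆ K.1}, by
    intro a b hba ha
    obtain ⟨G, hG, G', hG', hsub⟩ := ha
    exact ⟨G, hG, G', hG', hsub.trans hba⟩⟩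
  clabel l := LowerSet.Iic ⟨ptG l, isCGraph_ptG l⟩

lemma mem_cappW {U U' : GWorld Lb} {K : CGraph Lb} :
    K ∈ capp Lb U U' ↔ ∃ G ∈ U, ∃ G' ∈ U', gApp G.1 G'.1 ⊆ K.1 := Iff.rfl

lemma mem_IicW {A K : CGraph Lb} : K ∈ LowerSet.Iic A ↔ A.1 ⊆ K.1 := Iff.rfl

lemma clabelW_def (l : Lb) :
    clabel Lb (GWorld Lb) l = LowerSet.Iic ⟨ptG l, isCGraph_ptG l⟩ := rfl

lemma cappW_Iic (A B : CGraph Lb) :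
    capp Lb (LowerSet.Iic A) (LowerSet.Iic B) =
      LowerSet.Iic ⟨gApp A.1 B.1, isCGraph_gApp A.2 B.2⟩ := by
  apply LowerSet.ext
  ext K
  constructor
  · rintro ⟨G, hG, G', hG', hsub⟩
    exact (gApp_mono (mem_IicW.1 hG) (mem_IicW.1 hG')).trans hsub
  · intro h
    exact ⟨A, mem_IicW.2 subset_rfl, B, mem_IicW.2 subset_rfl, h⟩

lemma iInf_IicW {ι : Sort*} (f : ι → CGraph Lb) :
    (⨅ i, LowerSet.Iic (f i)) =
      LowerSet.Iic ⟨transCl (⋃ i, (f i).1), isCGraph_transCl_iUnion (fun i => (f i).2)⟩ := by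
  apply LowerSet.ext
  ext K
  simp only [LowerSet.coe_iInf, Set.mem_iInter, SetLike.mem_coe, LowerSet.mem_Iic_iff]
  constructor
  · intro h
    exact mem_IicW.2 (transCl_subset_of_trans (Set.iUnion_subset fun i => h i) K.2.2)
  · intro h i
    exact mem_IicW.2 ((Set.subset_iUnion (fun i => (f i).1) i).trans
      ((subset_transCl _).trans (mem_IicW.1 h)))

lemma topW_eq : (⊤ : GWorld Lb) = LowerSet.Iic ⟨∅, IsCGraph.empty⟩ := by
  apply LowerSet.ext
  ext K
  simp only [LowerSet.coe_top, Set.mem_univ, true_iff, SetLike.mem_coe]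
  exact mem_IicW.2 (Set.empty_subset _)

lemma inf_IicW (A B : CGraph Lb) :
    LowerSet.Iic A ⊓ LowerSet.Iic B =
      LowerSet.Iic ⟨transCl (A.1 ∪ B.1), by
        refine isCGraph_transCl ?_
        rintro ⟨a, b⟩ (hp | hp)
        · exact ⟨Or.inl (A.2.1 _ _ hp).1, Or.inl (A.2.1 _ _ hp).2⟩
        · exact ⟨Or.inr (B.2.1 _ _ hp).1, Or.inr (B.2.1 _ _ hp).2⟩⟩ := by
  apply LowerSet.ext
  ext K
  simp only [LowerSet.coe_inf, Set.mem_inter_iff, SetLike.mem_coe, LowerSet.mem_Iic_iff,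
    CGraph.le_iff]
  constructor
  · rintro ⟨h1, h2⟩
    exact transCl_subset_of_trans (Set.union_subset h1 h2) K.2.2
  · intro h
    constructor
    · exact (Set.subset_union_left.trans ((subset_transCl _).trans h))
    · exact (Set.subset_union_right.trans ((subset_transCl _).trans h))

lemma IicW_le_IicW {A B : CGraph Lb} (h : LowerSet.Iic A ≤ LowerSet.Iic B) : A ≤ B := by
  have h2 : A ∈ LowerSet.Iic B := h (LowerSet.mem_Iic_iff.2 le_rfl)
  exact LowerSet.mem_Iic_iff.1 h2

lemma Iic_injW {A B : CGraph Lb} (h : LowerSet.Iic A = LowerSet.Iic B) : A = B := by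
  have h1 : A ∈ LowerSet.Iic B := h ▸ LowerSet.mem_Iic_iff.2 le_rfl
  have h2 : B ∈ LowerSet.Iic A := h ▸ LowerSet.mem_Iic_iff.2 le_rfl
  exact le_antisymm (LowerSet.mem_Iic_iff.1 h1) (LowerSet.mem_Iic_iff.1 h2)

lemma isCause_W {U : GWorld Lb} (h : IsCause Lb U) :
    ∃ A : CGraph Lb, U = LowerSet.Iic A := by
  induction h with
  | label l => exact ⟨⟨ptG l, isCGraph_ptG l⟩, rfl⟩
  | inf S hS ih =>
      choose g hg using ih
      refine ⟨⟨transCl (⋃ v : S, (g v.1 v.2).1),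
        isCGraph_transCl_iUnion (fun v => (g v.1 v.2).2)⟩, ?_⟩
      rw [sInf_eq_iInf']
      have : (fun v : S => (v : GWorld Lb)) = fun v : S => LowerSet.Iic (g v.1 v.2) := by
        funext v; exact hg v.1 v.2
      rw [show (⨅ v : S, (v : GWorld Lb)) = ⨅ v : S, LowerSet.Iic (g v.1 v.2) from
        iInf_congr (fun v => hg v.1 v.2)]
      exact iInf_IicW _
  | app t u ht hu iht ihu =>
      obtain ⟨A, rfl⟩ := iht
      obtain ⟨B, rfl⟩ := ihu
      exact ⟨_, cappW_Iic A B⟩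

lemma cappW_le_left (U U' : GWorld Lb) : capp Lb U U' ≤ U := by
  intro K hK
  obtain ⟨G, hG, G', hG', hsub⟩ := hK
  have hGK : G.1 ⊆ K.1 := by
    refine Set.Subset.trans ?_ hsub
    refine Set.Subset.trans ?_ (subset_transCl _)
    exact fun p hp => Or.inl (Or.inl hp)
  exact U.2 (show K ≤ G from hGK) hG

lemma cappW_le_right (U U' : GWorld Lb) : capp Lb U U' ≤ U' := by
  intro K hK
  obtain ⟨G, hG, G', hG', hsub⟩ := hK
  have hGK : G'.1 ⊆ K.1 := by
    refine Set.Subset.trans ?_ hsub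
    refine Set.Subset.trans ?_ (subset_transCl _)
    exact fun p hp => Or.inl (Or.inr hp)
  exact U'.2 (show K ≤ G' from hGK) hG'

instance : CausalAlgebra Lb (GWorld Lb) where
  capp_assoc t u w := by
    apply LowerSet.ext
    ext K
    simp only [SetLike.mem_coe, mem_cappW]
    constructor
    · rintro ⟨G, hG, K', ⟨G', hG', G'', hG'', hsub'⟩, hsub⟩
      refine ⟨⟨gApp G.1 G'.1, isCGraph_gApp G.2 G'.2⟩, ?_, G'', hG'', ?_⟩
      · exact mem_cappW.2 ⟨G, hG, G', hG', subset_rfl⟩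
      · rw [gApp_assoc G.2 G'.2 G''.2]
        exact (gApp_mono subset_rfl hsub').trans hsub
    · rintro ⟨K', ⟨G, hG, G', hG', hsub'⟩, G'', hG'', hsub⟩
      refine ⟨G, hG, ⟨gApp G'.1 G''.1, isCGraph_gApp G'.2 G''.2⟩, ?_, ?_⟩
      · exact mem_cappW.2 ⟨G', hG', G'', hG'', subset_rfl⟩
      · rw [← gApp_assoc G.2 G'.2 G''.2]
        exact (gApp_mono hsub' subset_rfl).trans hsub
  absorb_sup t u w := sup_eq_left.2 ((cappW_le_left _ _).trans (cappW_le_right _ _))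
  absorb_inf t u w := inf_eq_right.2 ((cappW_le_left _ _).trans (cappW_le_right _ _))
  top_capp t := by
    apply le_antisymm (cappW_le_right _ _)
    intro K hK
    refine mem_cappW.2 ⟨⟨∅, IsCGraph.empty⟩, trivial, K, hK, ?_⟩
    rw [gApp_empty_left K.2]
  capp_top t := by
    apply le_antisymm (cappW_le_left _ _)
    intro K hK
    refine mem_cappW.2 ⟨K, hK, ⟨∅, IsCGraph.empty⟩, trivial, ?_⟩
    rw [gApp_empty_right K.2]
  capp_bot t := by
    apply le_antisymm ?_ bot_le
    intro K hK
    obtain ⟨G, hG, G', hG', hsub⟩ := hK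
    exact absurd hG' (by simp)
  bot_capp t := by
    apply le_antisymm ?_ bot_le
    intro K hK
    obtain ⟨G, hG, G', hG', hsub⟩ := hK
    exact absurd hG (by simp)
  label_idem l := by
    erw [clabelW_def, cappW_Iic]
    refine congrArg LowerSet.Iic (Subtype.ext ?_)
    refine (gApp_ptG l l).trans ?_
    simp [edgeS, ptG]
  capp_sSup t S := by
    apply LowerSet.ext
    ext K
    simp only [SetLike.mem_coe, mem_cappW, LowerSet.mem_iSup₂_iff, LowerSet.mem_sSup_iff]
    constructor
    · rintro ⟨G, hG, G', ⟨u, hu, hGu⟩, hsub⟩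
      exact ⟨u, hu, mem_cappW.2 ⟨G, hG, G', hGu, hsub⟩⟩
    · rintro ⟨u, hu, hK⟩
      obtain ⟨G, hG, G', hG', hsub⟩ := mem_cappW.1 hK
      exact ⟨G, hG, G', ⟨u, hu, hG'⟩, hsub⟩
  sSup_capp S t := by
    apply LowerSet.ext
    ext K
    simp only [SetLike.mem_coe, mem_cappW, LowerSet.mem_iSup₂_iff, LowerSet.mem_sSup_iff]
    constructor
    · rintro ⟨G, ⟨u, hu, hGu⟩, G', hG', hsub⟩
      exact ⟨u, hu, mem_cappW.2 ⟨G, hGu, G', hG', hsub⟩⟩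
    · rintro ⟨u, hu, hK⟩
      obtain ⟨G, hG, G', hG', hsub⟩ := mem_cappW.1 hK
      exact ⟨G, ⟨u, hu, hG⟩, G', hG', hsub⟩
  cause_capp_capp c d e hc hd he hdtop := by
    obtain ⟨A, rfl⟩ := isCause_W hc
    obtain ⟨B, rfl⟩ := isCause_W hd
    obtain ⟨C, rfl⟩ := isCause_W he
    have hBne : B.1.Nonempty := by
      rcases Set.eq_empty_or_nonempty B.1 with h | h
      · exact absurd (by rw [topW_eq]; exact congrArg LowerSet.Iic (Subtype.ext h)) hdtop
      · exact h
    erw [cappW_Iic, cappW_Iic, cappW_Iic, inf_IicW]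
    exact congrArg LowerSet.Iic (Subtype.ext (gApp_gApp_cc A.2 B.2 C.2 hBne))
  cause_capp_inf c d e hc hd he := by
    obtain ⟨A, rfl⟩ := isCause_W hc
    obtain ⟨B, rfl⟩ := isCause_W hd
    obtain ⟨C, rfl⟩ := isCause_W he
    erw [inf_IicW, cappW_Iic, cappW_Iic, cappW_Iic, inf_IicW]
    exact congrArg LowerSet.Iic (Subtype.ext (gApp_transCl_union_right A.2 B.2 C.2))
  cause_inf_capp c d e hc hd he := by
    obtain ⟨A, rfl⟩ := isCause_W hc
    obtain ⟨B, rfl⟩ := isCause_W hd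
    obtain ⟨C, rfl⟩ := isCause_W he
    erw [inf_IicW, cappW_Iic, cappW_Iic, cappW_Iic, inf_IicW]
    exact congrArg LowerSet.Iic (Subtype.ext (gApp_transCl_union_left C.2 A.2 B.2))
  cause_capp_sInf c S hc hS hSne := by
    obtain ⟨A, rfl⟩ := isCause_W hc
    have hprin : ∀ d : S, ∃ B : CGraph Lb, (d : GWorld Lb) = LowerSet.Iic B :=
      fun d => isCause_W (hS d.1 d.2)
    choose g hg using hprin
    haveI : Nonempty S := hSne.to_subtype
    have h1 : sInf S = LowerSet.Iic ⟨transCl (⋃ v : S, (g v).1),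
        isCGraph_transCl_iUnion (fun v => (g v).2)⟩ := by
      rw [sInf_eq_iInf', show (⨅ v : S, (v : GWorld Lb)) = ⨅ v : S, LowerSet.Iic (g v) from
        iInf_congr hg]
      exact iInf_IicW _
    erw [h1, cappW_Iic]
    have h2 : gApp A.1 (transCl (⋃ v : S, (g v).1)) = transCl (⋃ v : S, gApp A.1 (g v).1) :=
      gApp_transCl_iUnion_right A.2 (fun v => (g v).2)
    have h3 : (⨅ d ∈ S, capp Lb (LowerSet.Iic A) d) =
        ⨅ v : S, capp Lb (LowerSet.Iic A) (LowerSet.Iic (g v)) := by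
      rw [iInf_subtype']
      exact iInf_congr fun v => congrArg _ (hg v)
    erw [h3, show (⨅ v : S, capp Lb (LowerSet.Iic A) (LowerSet.Iic (g v))) =
        ⨅ v : S, LowerSet.Iic ⟨gApp A.1 (g v).1, isCGraph_gApp A.2 (g v).2⟩ from
      iInf_congr fun v => cappW_Iic A (g v), iInf_IicW]
    exact congrArg LowerSet.Iic (Subtype.ext h2)
  cause_sInf_capp S e hS he hSne := by
    obtain ⟨A, rfl⟩ := isCause_W he
    have hprin : ∀ d : S, ∃ B : CGraph Lb, (d : GWorld Lb) = LowerSet.Iic B :=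
      fun d => isCause_W (hS d.1 d.2)
    choose g hg using hprin
    haveI : Nonempty S := hSne.to_subtype
    have h1 : sInf S = LowerSet.Iic ⟨transCl (⋃ v : S, (g v).1),
        isCGraph_transCl_iUnion (fun v => (g v).2)⟩ := by
      rw [sInf_eq_iInf', show (⨅ v : S, (v : GWorld Lb)) = ⨅ v : S, LowerSet.Iic (g v) from
        iInf_congr hg]
      exact iInf_IicW _
    erw [h1, cappW_Iic]
    have h2 : gApp (transCl (⋃ v : S, (g v).1)) A.1 = transCl (⋃ v : S, gApp (g v).1 A.1) :=
      gApp_transCl_iUnion_left A.2 (fun v => (g v).2)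
    have h3 : (⨅ d ∈ S, capp Lb d (LowerSet.Iic A)) =
        ⨅ v : S, capp Lb (LowerSet.Iic (g v)) (LowerSet.Iic A) := by
      rw [iInf_subtype']
      exact iInf_congr fun v => congrArg (fun x => capp Lb x (LowerSet.Iic A)) (hg v)
    erw [h3, show (⨅ v : S, capp Lb (LowerSet.Iic (g v)) (LowerSet.Iic A)) =
        ⨅ v : S, LowerSet.Iic ⟨gApp (g v).1 A.1, isCGraph_gApp (g v).2 A.2⟩ from
      iInf_congr fun v => cappW_Iic (g v) A, iInf_IicW]
    exact congrArg LowerSet.Iic (Subtype.ext h2)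

/-! ### Lemmas in an abstract causal algebra -/

section Vlemmas

variable {V : Type} [CompletelyDistribLattice V] [CausalOps Lb V]

lemma capp_sup_right (hA : CausalAlgebra Lb V) (t u u' : V) :
    capp Lb t (u ⊔ u') = capp Lb t u ⊔ capp Lb t u' := by
  have h := hA.capp_sSup t {u, u'}
  rw [sSup_pair] at h
  rw [h, iSup_pair]

lemma capp_sup_left (hA : CausalAlgebra Lb V) (t t' u : V) :
    capp Lb (t ⊔ t') u = capp Lb t u ⊔ capp Lb t' u := by
  have h := hA.sSup_capp {t, t'} u
  rw [sSup_pair] at h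
  rw [h, iSup_pair]

lemma capp_le_left (hA : CausalAlgebra Lb V) (t u : V) : capp Lb t u ≤ t := by
  have h := hA.absorb_sup t ⊤ u
  rw [hA.top_capp] at h
  exact sup_eq_left.1 h

lemma capp_le_right (hA : CausalAlgebra Lb V) (t u : V) : capp Lb t u ≤ u := by
  have h := hA.absorb_sup u t ⊤
  rw [hA.capp_top] at h
  exact sup_eq_left.1 h

lemma capp_mono (hA : CausalAlgebra Lb V) {t t' u u' : V} (ht : t ≤ t') (hu : u ≤ u') :
    capp Lb t u ≤ capp Lb t' u' := by
  have h1 : capp Lb t u ≤ capp Lb t' u := by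
    have h := capp_sup_left hA t t' u
    rw [sup_eq_right.2 ht] at h
    rw [h]
    exact le_sup_left
  have h2 : capp Lb t' u ≤ capp Lb t' u' := by
    have h := capp_sup_right hA t' u u'
    rw [sup_eq_right.2 hu] at h
    rw [h]
    exact le_sup_left
  exact h1.trans h2

lemma isCause_capp_labels (a b : Lb) :
    IsCause Lb (capp Lb (clabel Lb V a) (clabel Lb V b)) :=
  IsCause.app _ _ (IsCause.label a) (IsCause.label b)

lemma isCause_termV (G : Set (Lb × Lb)) : IsCause Lb (termV Lb V G) := by
  refine IsCause.inf _ ?_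
  rintro v ⟨p, hp, rfl⟩
  exact isCause_capp_labels p.1 p.2

lemma lbl_tle (hA : CausalAlgebra Lb V) (hlab : ∀ l : Lb, clabel Lb V l ≠ ⊤) (a b c : Lb) :
    capp Lb (clabel Lb V a) (clabel Lb V b) ⊓ capp Lb (clabel Lb V b) (clabel Lb V c) ≤
      capp Lb (clabel Lb V a) (clabel Lb V c) := by
  have h1 : capp Lb (capp Lb (clabel Lb V a) (clabel Lb V b)) (clabel Lb V c) =
      capp Lb (clabel Lb V a) (clabel Lb V b) ⊓ capp Lb (clabel Lb V b) (clabel Lb V c) :=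
    hA.cause_capp_capp _ _ _ (IsCause.label a) (IsCause.label b) (IsCause.label c) (hlab b)
  have h2 : capp Lb (clabel Lb V a) (capp Lb (clabel Lb V b) (clabel Lb V c)) =
      capp Lb (capp Lb (clabel Lb V a) (clabel Lb V b)) (clabel Lb V c) :=
    hA.capp_assoc _ _ _
  have h3 : capp Lb (clabel Lb V b) (clabel Lb V c) ⊓ clabel Lb V c =
      capp Lb (clabel Lb V b) (clabel Lb V c) := by
    have h := hA.absorb_inf (clabel Lb V c) (clabel Lb V b) ⊤
    rw [hA.capp_top] at h
    rw [inf_comm]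
    exact h
  have h4 : capp Lb (clabel Lb V a) (capp Lb (clabel Lb V b) (clabel Lb V c)) ⊓
      capp Lb (clabel Lb V a) (clabel Lb V c) =
      capp Lb (clabel Lb V a) (capp Lb (clabel Lb V b) (clabel Lb V c)) := by
    rw [← hA.cause_capp_inf _ _ _ (IsCause.label a) (isCause_capp_labels b c)
      (IsCause.label c), h3]
  rw [← h1, ← h2]
  exact inf_eq_left.1 h4

lemma le_capp_trans (hA : CausalAlgebra Lb V) (hlab : ∀ l : Lb, clabel Lb V l ≠ ⊤)
    {x : V} (a b c : Lb) (h1 : x ≤ capp Lb (clabel Lb V a) (clabel Lb V b))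
    (h2 : x ≤ capp Lb (clabel Lb V b) (clabel Lb V c)) :
    x ≤ capp Lb (clabel Lb V a) (clabel Lb V c) :=
  (le_inf h1 h2).trans (lbl_tle hA hlab a b c)

lemma termV_le {G : Set (Lb × Lb)} {a b : Lb} (h : (a, b) ∈ G) :
    termV Lb V G ≤ capp Lb (clabel Lb V a) (clabel Lb V b) :=
  sInf_le ⟨(a, b), h, rfl⟩

lemma le_termV {G : Set (Lb × Lb)} {x : V}
    (h : ∀ a b : Lb, (a, b) ∈ G → x ≤ capp Lb (clabel Lb V a) (clabel Lb V b)) :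
    x ≤ termV Lb V G := by
  refine le_sInf ?_
  rintro y ⟨⟨a, b⟩, hp, rfl⟩
  exact h a b hp

lemma termV_anti {G G' : Set (Lb × Lb)} (h : G ⊆ G') : termV Lb V G' ≤ termV Lb V G :=
  sInf_le_sInf (Set.image_mono h)

lemma termV_empty : termV Lb V (∅ : Set (Lb × Lb)) = ⊤ := by
  simp [termV]

lemma termV_union (G G' : Set (Lb × Lb)) :
    termV Lb V (G ∪ G') = termV Lb V G ⊓ termV Lb V G' := by
  rw [termV, termV, termV, Set.image_union, sInf_union]

lemma termV_transCl (hA : CausalAlgebra Lb V) (hlab : ∀ l : Lb, clabel Lb V l ≠ ⊤)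
    (E : Set (Lb × Lb)) : termV Lb V (transCl E) = termV Lb V E := by
  refine le_antisymm (termV_anti (subset_transCl E)) (le_termV ?_)
  intro a b hp
  simp only [transCl, Set.mem_setOf_eq] at hp
  induction hp with
  | single h => exact termV_le h
  | tail _ h ih => exact le_capp_trans hA hlab _ _ _ ih (termV_le h)

lemma sInf_iUnion' {ι : Sort*} (s : ι → Set V) : sInf (⋃ i, s i) = ⨅ i, sInf (s i) := by
  apply le_antisymm (le_iInf fun i => sInf_le_sInf (Set.subset_iUnion s i))
  refine le_sInf ?_
  rintro x hx
  obtain ⟨i, hi⟩ := Set.mem_iUnion.1 hx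
  exact (iInf_le _ i).trans (sInf_le hi)

lemma termV_gApp (hA : CausalAlgebra Lb V) (hlab : ∀ l : Lb, clabel Lb V l ≠ ⊤)
    {G G' : Set (Lb × Lb)} (hG : IsCGraph G) (hG' : IsCGraph G') :
    termV Lb V (gApp G G') = capp Lb (termV Lb V G) (termV Lb V G') := by
  rcases eq_or_ne G ∅ with rfl | hGne
  · rw [gApp_empty_left hG', termV_empty, hA.top_capp]
  rcases eq_or_ne G' ∅ with rfl | hG'ne
  · rw [gApp_empty_right hG, termV_empty, hA.capp_top]
  have hGn : G.Nonempty := Set.nonempty_iff_ne_empty.2 hGne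
  have hG'n : G'.Nonempty := Set.nonempty_iff_ne_empty.2 hG'ne
  set f : Lb × Lb → V := fun p => capp Lb (clabel Lb V p.1) (clabel Lb V p.2) with hf
  have hcf : ∀ v ∈ f '' G, IsCause Lb v := by
    rintro v ⟨p, hp, rfl⟩; exact isCause_capp_labels p.1 p.2
  have hcf' : ∀ v ∈ f '' G', IsCause Lb v := by
    rintro v ⟨p, hp, rfl⟩; exact isCause_capp_labels p.1 p.2
  have hR : capp Lb (termV Lb V G) (termV Lb V G') = ⨅ p ∈ G, ⨅ q ∈ G', capp Lb (f p) (f q) := by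
    have e1 : capp Lb (termV Lb V G) (termV Lb V G') = ⨅ u ∈ f '' G, capp Lb u (termV Lb V G') :=
      hA.cause_sInf_capp (f '' G) _ hcf (isCause_termV G') (hGn.image f)
    rw [e1, iInf_image]
    refine iInf_congr fun p => iInf_congr fun hp => ?_
    have e2 : capp Lb (f p) (termV Lb V G') = ⨅ u ∈ f '' G', capp Lb (f p) u :=
      hA.cause_capp_sInf (f p) (f '' G') (isCause_capp_labels p.1 p.2) hcf' (hG'n.image f)
    rw [e2, iInf_image]
  apply le_antisymm
  · rw [hR]
    refine le_iInf₂ fun p hp => le_iInf₂ fun q hq => ?_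
    obtain ⟨a, b⟩ := p
    obtain ⟨c, d⟩ := q
    have hab : (a, b) ∈ gApp G G' := subset_transCl _ (Or.inl (Or.inl hp))
    have hcd : (c, d) ∈ gApp G G' := subset_transCl _ (Or.inl (Or.inr hq))
    have hbd : (b, d) ∈ gApp G G' :=
      subset_transCl _ (Or.inr ⟨(hG.1 _ _ hp).2, (hG'.1 _ _ hq).2⟩)
    have hbc : (b, c) ∈ gApp G G' :=
      subset_transCl _ (Or.inr ⟨(hG.1 _ _ hp).2, (hG'.1 _ _ hq).1⟩)
    have e1 : capp Lb (f (a, b)) (f (c, d)) =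
        (f (a, b) ⊓ f (b, d)) ⊓ (f (b, c) ⊓ f (c, d)) := by
      simp only [hf]
      calc capp Lb (capp Lb (clabel Lb V a) (clabel Lb V b))
            (capp Lb (clabel Lb V c) (clabel Lb V d))
          = capp Lb (capp Lb (capp Lb (clabel Lb V a) (clabel Lb V b)) (clabel Lb V c))
              (clabel Lb V d) := hA.capp_assoc _ _ _
        _ = capp Lb (capp Lb (clabel Lb V a) (clabel Lb V b) ⊓
              capp Lb (clabel Lb V b) (clabel Lb V c)) (clabel Lb V d) := by
            rw [hA.cause_capp_capp _ _ _ (IsCause.label a) (IsCause.label b)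
              (IsCause.label c) (hlab b)]
        _ = capp Lb (capp Lb (clabel Lb V a) (clabel Lb V b)) (clabel Lb V d) ⊓
              capp Lb (capp Lb (clabel Lb V b) (clabel Lb V c)) (clabel Lb V d) :=
            hA.cause_inf_capp _ _ _ (isCause_capp_labels a b) (isCause_capp_labels b c)
              (IsCause.label d)
        _ = _ := by
            rw [hA.cause_capp_capp _ _ _ (IsCause.label a) (IsCause.label b)
              (IsCause.label d) (hlab b),
              hA.cause_capp_capp _ _ _ (IsCause.label b) (IsCause.label c)
              (IsCause.label d) (hlab c)]
    rw [e1]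
    exact le_inf (le_inf (termV_le hab) (termV_le hbd)) (le_inf (termV_le hbc) (termV_le hcd))
  · refine le_termV ?_
    intro u w hp
    have base : ∀ u w : Lb, (u, w) ∈ eset G G' →
        capp Lb (termV Lb V G) (termV Lb V G') ≤ capp Lb (clabel Lb V u) (clabel Lb V w) := by
      rintro u w ((h | h) | h)
      · exact (capp_le_left hA _ _).trans (termV_le h)
      · exact (capp_le_right hA _ _).trans (termV_le h)
      · have h1 : termV Lb V G ≤ capp Lb (clabel Lb V u) (clabel Lb V u) := termV_le h.1
        have h2 : termV Lb V G' ≤ capp Lb (clabel Lb V w) (clabel Lb V w) := termV_le h.2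
        have := capp_mono hA h1 h2
        rwa [hA.label_idem, hA.label_idem] at this
    simp only [gApp, transCl, Set.mem_setOf_eq] at hp
    induction hp with
    | single h => exact base _ _ h
    | tail _ h ih => exact le_capp_trans hA hlab _ _ _ ih (base _ _ h)

end Vlemmas

lemma termV_surj {V : Type} [CompletelyDistribLattice V] [CausalOps Lb V]
    (hA : CausalAlgebra Lb V) (hlab : ∀ l : Lb, clabel Lb V l ≠ ⊤) {v : V}
    (hv : IsCause Lb v) : ∃ G : Set (Lb × Lb), IsCGraph G ∧ termV Lb V G = v := by
  induction hv with
  | label l =>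
      refine ⟨ptG l, isCGraph_ptG l, ?_⟩
      have himg : (fun p : Lb × Lb => capp Lb (clabel Lb V p.1) (clabel Lb V p.2)) '' ptG l =
          {capp Lb (clabel Lb V l) (clabel Lb V l)} := by
        simp [ptG]
      simp only [termV]
      rw [himg, sInf_singleton, hA.label_idem]
  | inf S hS ih =>
      choose g hg1 hg2 using ih
      refine ⟨transCl (⋃ v : S, g v.1 v.2),
        isCGraph_transCl_iUnion (fun v => hg1 v.1 v.2), ?_⟩
      rw [termV_transCl hA hlab]
      simp only [termV]
      rw [Set.image_iUnion, sInf_iUnion']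
      have hcong : ∀ w : S, sInf ((fun p : Lb × Lb =>
          capp Lb (clabel Lb V p.1) (clabel Lb V p.2)) '' g w.1 w.2) = (w : V) :=
        fun w => hg2 w.1 w.2
      rw [iInf_congr hcong, ← sInf_eq_iInf']
  | app t u ht hu iht ihu =>
      obtain ⟨G, hG, rfl⟩ := iht
      obtain ⟨G', hG', rfl⟩ := ihu
      exact ⟨gApp G G', isCGraph_gApp hG hG', termV_gApp hA hlab hG hG'⟩


/-- Theorem 1: `term : C*_Lb → C_Lb` is an isomorphism between the algebras
`⟨C*_Lb, *, ·, ∅, ⊆⟩` and `⟨C_Lb, *, ·, 1, ≤⟩`: it maps causal graphs bijectively onto the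
causes, sends `∅` to `1 = ⊤`, the product `G * G' = G ∪ G'` to `term G * term G'`, the
application `G · G'` to `term G · term G'`, and `G ⊆ G'` iff `term G' ≤ term G`. -/
theorem term_isomorphism (Lb V : Type) [CompletelyDistribLattice V] [CausalOps Lb V]
    [IsValueAlgebra Lb V] :
    (termV Lb V (∅ : Set (Lb × Lb)) = (⊤ : V)) ∧
    (∀ G G' : Set (Lb × Lb), IsCGraph G → IsCGraph G' →
      termV Lb V (G ∪ G') = termV Lb V G ⊓ termV Lb V G') ∧
    (∀ G G' : Set (Lb × Lb), IsCGraph G → IsCGraph G' →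
      termV Lb V (gApp G G') = capp Lb (termV Lb V G) (termV Lb V G')) ∧
    (∀ G G' : Set (Lb × Lb), IsCGraph G → IsCGraph G' →
      (G ⊆ G' ↔ termV Lb V G' ≤ termV Lb V G)) ∧
    (∀ G : Set (Lb × Lb), IsCGraph G → IsCause Lb (termV Lb V G)) ∧
    (∀ G G' : Set (Lb × Lb), IsCGraph G → IsCGraph G' →
      termV Lb V G = termV Lb V G' → G = G') ∧
    (∀ v : V, IsCause Lb v → ∃ G : Set (Lb × Lb), IsCGraph G ∧ termV Lb V G = v) := by
  have hA : CausalAlgebra Lb V := IsValueAlgebra.alg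
  obtain ⟨h, hh, -⟩ := IsValueAlgebra.free (Lb := Lb) (V := V) (GWorld Lb) inferInstance
  obtain ⟨hsup, hinf, happ, hlbl⟩ := hh
  have htop : h ⊤ = ⊤ := by
    have := hinf ∅
    simpa using this
  have hmono : ∀ a b : V, a ≤ b → h a ≤ h b := by
    intro a b hab
    have h1 := hsup {a, b}
    rw [sSup_pair, sup_eq_right.2 hab, Set.image_pair, sSup_pair] at h1
    rw [h1]
    exact le_sup_left
  have hterm : ∀ (G : Set (Lb × Lb)) (hG : IsCGraph G),
      h (termV Lb V G) = LowerSet.Iic ⟨G, hG⟩ := by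
    intro G hG
    have e1 : ∀ p : Lb × Lb, h (capp Lb (clabel Lb V p.1) (clabel Lb V p.2)) =
        LowerSet.Iic ⟨edgeS p.1 p.2, isCGraph_edgeS p.1 p.2⟩ := by
      intro p
      erw [happ, hlbl, hlbl, clabelW_def, clabelW_def, cappW_Iic]
      exact congrArg LowerSet.Iic (Subtype.ext (gApp_ptG p.1 p.2))
    simp only [termV]
    rw [hinf, Set.image_image]
    rw [show (fun p : Lb × Lb => h (capp Lb (clabel Lb V p.1) (clabel Lb V p.2))) =
        fun p : Lb × Lb => LowerSet.Iic ⟨edgeS p.1 p.2, isCGraph_edgeS p.1 p.2⟩ from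
      funext e1]
    erw [sInf_image', iInf_IicW]
    exact congrArg LowerSet.Iic (Subtype.ext (transCl_iUnion_edgeS hG))
  have hlab : ∀ l : Lb, clabel Lb V l ≠ ⊤ := by
    intro l hl
    have h1 : h (clabel Lb V l) = LowerSet.Iic ⟨ptG l, isCGraph_ptG l⟩ :=
      (hlbl l).trans (clabelW_def l)
    rw [hl, htop, topW_eq] at h1
    have h2 := Iic_injW h1
    have h4 : (∅ : Set (Lb × Lb)) = ptG l := congrArg Subtype.val h2
    have h5 : (l, l) ∈ (∅ : Set (Lb × Lb)) := by
      rw [h4]; exact Set.mem_singleton _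
    exact h5
  refine ⟨termV_empty, fun G G' _ _ => termV_union G G',
    fun G G' hG hG' => termV_gApp hA hlab hG hG', ?_, fun G _ => isCause_termV G, ?_, ?_⟩
  · intro G G' hG hG'
    constructor
    · exact fun hsub => termV_anti hsub
    · intro hle
      have h1 := hmono _ _ hle
      rw [hterm G' hG', hterm G hG] at h1
      exact CGraph.le_iff.1 (IicW_le_IicW h1)
  · intro G G' hG hG' heq
    have h1 := congrArg h heq
    rw [hterm G hG, hterm G' hG'] at h1
    exact congrArg Subtype.val (Iic_injW h1)
  · intro v hv
    exact termV_surj hA hlab hv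

end Causal
end

section
/- Let P be a positive program. A standard interpretation J is a standard stable model of P if and only if there exists a causal stable model I of P such that I^st = J. -/
/-!  Causal values (Cabalar–Fandinno, causal stable models for disjunctive programs).

Causal values are the equivalence classes of terms (built from labels in `Lb` by possibly
infinite products `∏`, possibly infinite sums `∑` and application `·`) under the axioms of a
completely distributive complete lattice (meet `*` = `⊓`/`sInf`, join `+` = `⊔`/`sSup`,
`1` = `⊤` the empty product, `0` = `⊥` the empty sum) together with the axioms for
application listed in the paper.  We formalize "the algebra of causal values `V_Lb`" as a
causal algebra (a completely distributive complete lattice with the extra operations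
satisfying the axioms) that is free/initial, i.e. a quotient of the term algebra by exactly
the equational theory generated by the axioms. -/

open scoped Classical

namespace Causal

section Aux1

variable {Lb V : Type} [CompletelyDistribLattice V] [CausalOps Lb V]

lemma capp_mono_left [CausalAlgebra Lb V] {t t' : V} (h : t ≤ t') (u : V) :
    capp Lb t u ≤ capp Lb t' u := by
  have hs := CausalAlgebra.sSup_capp (Lb := Lb) (V := V) ({t, t'} : Set V) u
  rw [sSup_pair, sup_eq_right.mpr h, iSup_pair] at hs
  exact hs ▸ le_sup_left

lemma capp_mono_right [CausalAlgebra Lb V] (t : V) {u u' : V} (h : u ≤ u') :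
    capp Lb t u ≤ capp Lb t u' := by
  have hs := CausalAlgebra.capp_sSup (Lb := Lb) (V := V) t ({u, u'} : Set V)
  rw [sSup_pair, sup_eq_right.mpr h, iSup_pair] at hs
  exact hs ▸ le_sup_left

noncomputable instance propCausalOps (Lb : Type) : CausalOps Lb Prop where
  capp p q := p ∧ q
  clabel _ := True

lemma propCausalAlgebra (Lb : Type) : CausalAlgebra Lb Prop := by
  have hinf : ∀ p q : Prop, (p ⊓ q) = (p ∧ q) := fun p q => rfl
  have hsup : ∀ p q : Prop, (p ⊔ q) = (p ∨ q) := fun p q => rfl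
  constructor <;>
    simp only [capp, clabel, CausalOps.capp, CausalOps.clabel, eq_iff_iff, ne_eq, hinf, hsup,
      sSup_Prop_eq, sInf_Prop_eq, iSup_Prop_eq, iInf_Prop_eq] <;>
    intros <;>
    try tauto
  case cause_capp_sInf c S _ _ hS =>
    obtain ⟨x, hx⟩ := hS
    exact ⟨fun ⟨hc, hall⟩ i hi => ⟨hc, hall i hi⟩,
      fun h => ⟨(h x hx).1, fun p hp => (h p hp).2⟩⟩
  case cause_sInf_capp S e _ _ hS =>
    obtain ⟨x, hx⟩ := hS
    exact ⟨fun ⟨hall, he⟩ i hi => ⟨hall i hi, he⟩,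
      fun h => ⟨fun p hp => (h p hp).1, (h x hx).2⟩⟩

lemma cause_ne_bot [IsValueAlgebra Lb V] {c : V} (hc : IsCause Lb c) : c ≠ ⊥ := by
  obtain ⟨h, ⟨hsup', hinf', happ', hlab'⟩, -⟩ :=
    IsValueAlgebra.free (Lb := Lb) (V := V) Prop (propCausalAlgebra Lb)
  have key : ∀ c : V, IsCause Lb c → h c := by
    intro c hc
    induction hc with
    | label l => rw [hlab']; exact trivial
    | inf S hS ih =>
      rw [hinf', sInf_Prop_eq]
      rintro p ⟨v, hv, rfl⟩
      exact ih v hv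
    | app t u ht hu iht ihu => rw [happ']; exact ⟨iht, ihu⟩
  have hbot : ¬ h ⊥ := by
    have h0 := hsup' ∅
    rw [Set.image_empty, sSup_empty, sSup_empty] at h0
    simp [h0]
  intro hceq
  exact hbot (hceq ▸ key c hc)

lemma top_isCause : IsCause Lb (⊤ : V) := by
  rw [show (⊤ : V) = sInf ∅ from sInf_empty.symm]
  exact IsCause.inf ∅ (by simp)

lemma vbot_ne_top [IsValueAlgebra Lb V] : (⊥ : V) ≠ ⊤ :=
  fun h => cause_ne_bot (top_isCause (Lb := Lb)) h.symm

end Aux1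

section Aux2

variable (Lb V : Type) [CompletelyDistribLattice V] [CausalOps Lb V] [CausalAlgebra Lb V]

/-- An element is good if it is `⊥` or has a cause below it. -/
def Good (v : V) : Prop := v = ⊥ ∨ ∃ c, IsCause Lb c ∧ c ≤ v

variable {Lb V}

lemma good_bot : Good Lb V (⊥ : V) := Or.inl rfl

lemma good_top : Good Lb V (⊤ : V) := Or.inr ⟨⊤, top_isCause, le_rfl⟩

lemma good_sSup {S : Set V} (hS : ∀ v ∈ S, Good Lb V v) : Good Lb V (sSup S) := by
  by_cases hb : sSup S = ⊥
  · exact Or.inl hb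
  · have : ∃ v ∈ S, v ≠ ⊥ := by
      by_contra hall
      push_neg at hall
      exact hb (le_bot_iff.mp (sSup_le fun v hv => le_bot_iff.mpr (hall v hv)))
    obtain ⟨v, hv, hvb⟩ := this
    rcases hS v hv with rfl | ⟨c, hc, hcv⟩
    · exact absurd rfl hvb
    · exact Or.inr ⟨c, hc, hcv.trans (le_sSup hv)⟩

open Classical in
lemma good_sInf {S : Set V} (hS : ∀ v ∈ S, Good Lb V v) : Good Lb V (sInf S) := by
  by_cases hb : ∃ v ∈ S, v = ⊥
  · obtain ⟨v, hv, hveq⟩ := hb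
    exact Or.inl (le_bot_iff.mp (hveq ▸ sInf_le hv))
  · push_neg at hb
    have hco : ∀ v ∈ S, ∃ c, IsCause Lb c ∧ c ≤ v := by
      intro v hv
      rcases hS v hv with hveq | h
      · exact absurd hveq (hb v hv)
      · exact h
    choose! f hf1 hf2 using hco
    have h1 : IsCause Lb (sInf (f '' S)) :=
      IsCause.inf (f '' S) (by rintro w ⟨v, hv, rfl⟩; exact hf1 v hv)
    have h2 : sInf (f '' S) ≤ sInf S :=
      le_sInf fun v hv => (sInf_le (Set.mem_image_of_mem f hv)).trans (hf2 v hv)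
    exact Or.inr ⟨sInf (f '' S), h1, h2⟩

lemma good_sup {a b : V} (ha : Good Lb V a) (hb : Good Lb V b) : Good Lb V (a ⊔ b) := by
  rw [← sSup_pair]
  exact good_sSup (by rintro v (rfl | rfl) <;> assumption)

lemma good_inf {a b : V} (ha : Good Lb V a) (hb : Good Lb V b) : Good Lb V (a ⊓ b) := by
  rw [← sInf_pair]
  exact good_sInf (by rintro v (rfl | rfl) <;> assumption)

lemma good_capp {a b : V} (ha : Good Lb V a) (hb : Good Lb V b) : Good Lb V (capp Lb a b) := by
  rcases ha with rfl | ⟨c, hc, hca⟩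
  · exact Or.inl (CausalAlgebra.bot_capp b)
  rcases hb with rfl | ⟨d, hd, hdb⟩
  · exact Or.inl (CausalAlgebra.capp_bot a)
  exact Or.inr ⟨capp Lb c d, IsCause.app c d hc hd,
    (capp_mono_left hca d).trans (capp_mono_right a hdb)⟩

lemma good_clabel (l : Lb) : Good Lb V (clabel Lb V l) :=
  Or.inr ⟨clabel Lb V l, IsCause.label l, le_rfl⟩

variable (Lb V)

/-- The subalgebra of good elements. -/
abbrev GoodSub : Type := {v : V // Good Lb V v}

namespace GoodSub

instance : SupSet (GoodSub Lb V) :=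
  ⟨fun S => ⟨sSup (Subtype.val '' S), good_sSup (by rintro v ⟨w, _, rfl⟩; exact w.2)⟩⟩

instance : InfSet (GoodSub Lb V) :=
  ⟨fun S => ⟨sInf (Subtype.val '' S), good_sInf (by rintro v ⟨w, _, rfl⟩; exact w.2)⟩⟩

instance : Max (GoodSub Lb V) := ⟨fun a b => ⟨a.1 ⊔ b.1, good_sup a.2 b.2⟩⟩

instance : Min (GoodSub Lb V) := ⟨fun a b => ⟨a.1 ⊓ b.1, good_inf a.2 b.2⟩⟩

instance : Top (GoodSub Lb V) := ⟨⟨⊤, good_top⟩⟩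

instance : Bot (GoodSub Lb V) := ⟨⟨⊥, good_bot⟩⟩

noncomputable instance : CompletelyDistribLattice (GoodSub Lb V) :=
  letI : CompleteLattice (GoodSub Lb V) :=
    Function.Injective.completeLattice (Subtype.val : GoodSub Lb V → V) Subtype.val_injective
      Iff.rfl Iff.rfl (fun _ _ => rfl) (fun _ _ => rfl)
      (fun S => sSup_image) (fun S => sInf_image) rfl rfl
  CompletelyDistribLattice.ofMinimalAxioms <|
    Function.Injective.completelyDistribLatticeMinimalAxioms
      (CompletelyDistribLattice.MinimalAxioms.of) (Subtype.val : GoodSub Lb V → V)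
      Subtype.val_injective
      (fun S => sSup_image) (fun S => sInf_image)

noncomputable instance : CausalOps Lb (GoodSub Lb V) where
  capp a b := ⟨capp Lb a.1 b.1, good_capp a.2 b.2⟩
  clabel l := ⟨clabel Lb V l, good_clabel l⟩

variable {Lb V}

@[simp] lemma val_sSup (S : Set (GoodSub Lb V)) :
    (sSup S).1 = sSup (Subtype.val '' S) := rfl

@[simp] lemma val_sInf (S : Set (GoodSub Lb V)) :
    (sInf S).1 = sInf (Subtype.val '' S) := rfl

@[simp] lemma val_sup (a b : GoodSub Lb V) : (a ⊔ b).1 = a.1 ⊔ b.1 := rfl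

@[simp] lemma val_inf (a b : GoodSub Lb V) : (a ⊓ b).1 = a.1 ⊓ b.1 := rfl

@[simp] lemma val_top : (⊤ : GoodSub Lb V).1 = ⊤ := rfl

@[simp] lemma val_bot : (⊥ : GoodSub Lb V).1 = ⊥ := rfl

@[simp] lemma val_capp (a b : GoodSub Lb V) :
    (capp Lb a b).1 = capp Lb a.1 b.1 := rfl

@[simp] lemma val_clabel (l : Lb) :
    (clabel Lb (GoodSub Lb V) l).1 = clabel Lb V l := rfl

@[simp] lemma val_iSup {ι : Sort*} (f : ι → GoodSub Lb V) :
    (⨆ i, f i).1 = ⨆ i, (f i).1 := by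
  rw [iSup, iSup]
  rw [val_sSup]
  rw [← Set.range_comp]
  rfl

@[simp] lemma val_iInf {ι : Sort*} (f : ι → GoodSub Lb V) :
    (⨅ i, f i).1 = ⨅ i, (f i).1 := by
  rw [iInf, iInf]
  rw [val_sInf]
  rw [← Set.range_comp]
  rfl

lemma val_le_val {a b : GoodSub Lb V} (h : a ≤ b) : a.1 ≤ b.1 := by
  rw [← sup_eq_right.mpr h, val_sup]
  exact le_sup_left

lemma isCause_val {c : GoodSub Lb V} (hc : IsCause Lb c) : IsCause Lb c.1 := by
  induction hc with
  | label l => exact IsCause.label l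
  | inf S hS ih =>
    exact IsCause.inf (Subtype.val '' S) (by rintro v ⟨w, hw, rfl⟩; exact ih w hw)
  | app t u ht hu iht ihu => exact IsCause.app t.1 u.1 iht ihu

lemma causalAlgebra : CausalAlgebra Lb (GoodSub Lb V) := by
  constructor
  · intro t u w
    exact Subtype.ext (CausalAlgebra.capp_assoc t.1 u.1 w.1)
  · intro t u w
    exact Subtype.ext (CausalAlgebra.absorb_sup t.1 u.1 w.1)
  · intro t u w
    exact Subtype.ext (CausalAlgebra.absorb_inf t.1 u.1 w.1)
  · intro t
    exact Subtype.ext (CausalAlgebra.top_capp t.1)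
  · intro t
    exact Subtype.ext (CausalAlgebra.capp_top t.1)
  · intro t
    exact Subtype.ext (CausalAlgebra.capp_bot t.1)
  · intro t
    exact Subtype.ext (CausalAlgebra.bot_capp t.1)
  · intro l
    exact Subtype.ext (CausalAlgebra.label_idem (V := V) l)
  · intro t S
    refine Subtype.ext ?_
    simp only [val_capp, val_sSup, val_iSup]
    rw [CausalAlgebra.capp_sSup t.1 (Subtype.val '' S), iSup_image]
  · intro S t
    refine Subtype.ext ?_
    simp only [val_capp, val_sSup, val_iSup]
    rw [CausalAlgebra.sSup_capp (Subtype.val '' S) t.1, iSup_image]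
  · intro c d e hc hd he hdt
    refine Subtype.ext ?_
    simp only [val_inf, val_capp]
    exact CausalAlgebra.cause_capp_capp c.1 d.1 e.1 (isCause_val hc) (isCause_val hd)
      (isCause_val he) (fun h => hdt (Subtype.ext h))
  · intro c d e hc hd he
    refine Subtype.ext ?_
    simp only [val_inf, val_capp]
    exact CausalAlgebra.cause_capp_inf c.1 d.1 e.1 (isCause_val hc) (isCause_val hd)
      (isCause_val he)
  · intro c d e hc hd he
    refine Subtype.ext ?_
    simp only [val_inf, val_capp]
    exact CausalAlgebra.cause_inf_capp c.1 d.1 e.1 (isCause_val hc) (isCause_val hd)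
      (isCause_val he)
  · intro c S hc hS hne
    refine Subtype.ext ?_
    simp only [val_capp, val_sInf, val_iInf]
    rw [CausalAlgebra.cause_capp_sInf c.1 (Subtype.val '' S) (isCause_val hc)
        (by rintro v ⟨w, hw, rfl⟩; exact isCause_val (hS w hw)) (hne.image _),
      iInf_image]
  · intro S e hS he hne
    refine Subtype.ext ?_
    simp only [val_capp, val_sInf, val_iInf]
    rw [CausalAlgebra.cause_sInf_capp (Subtype.val '' S) e.1
        (by rintro v ⟨w, hw, rfl⟩; exact isCause_val (hS w hw)) (isCause_val he)
        (hne.image _),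
      iInf_image]

lemma isCausalHom_val : IsCausalHom Lb (Subtype.val : GoodSub Lb V → V) := by
  refine ⟨fun S => rfl, fun S => rfl, fun t u => rfl, fun l => rfl⟩

end GoodSub

variable {Lb V}

lemma isCausalHom_id : IsCausalHom Lb (id : V → V) := by
  refine ⟨fun S => by simp, fun S => by simp, fun t u => rfl, fun l => rfl⟩

lemma IsCausalHom.comp {W X : Type} [CompletelyDistribLattice W] [CausalOps Lb W]
    [CompletelyDistribLattice X] [CausalOps Lb X] {g : W → X} {h : V → W}
    (hg : IsCausalHom Lb g) (hh : IsCausalHom Lb h) : IsCausalHom Lb (g ∘ h) := by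
  obtain ⟨hg1, hg2, hg3, hg4⟩ := hg
  obtain ⟨hh1, hh2, hh3, hh4⟩ := hh
  refine ⟨fun S => ?_, fun S => ?_, fun t u => ?_, fun l => ?_⟩
  · rw [Function.comp_apply, hh1, hg1, Set.image_image]; rfl
  · rw [Function.comp_apply, hh2, hg2, Set.image_image]; rfl
  · rw [Function.comp_apply, hh3, hg3]; rfl
  · rw [Function.comp_apply, hh4, hg4]

/-- Normal form consequence: every nonzero value has a nonzero cause below it. -/
lemma exists_cause_le {Lb V : Type} [CompletelyDistribLattice V] [CausalOps Lb V]
    [IsValueAlgebra Lb V] {v : V} (hv : v ≠ ⊥) :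
    ∃ c : V, IsCause Lb c ∧ c ≠ ⊥ ∧ c ≤ v := by
  haveI : CausalAlgebra Lb V := IsValueAlgebra.alg
  obtain ⟨h, hh, -⟩ :=
    IsValueAlgebra.free (Lb := Lb) (V := V) (GoodSub Lb V) GoodSub.causalAlgebra
  obtain ⟨f, -, huniq⟩ := IsValueAlgebra.free (Lb := Lb) (V := V) V ‹CausalAlgebra Lb V›
  have h1 : (Subtype.val ∘ h) = f := huniq _ (IsCausalHom.comp GoodSub.isCausalHom_val hh)
  have h2 : (id : V → V) = f := huniq _ isCausalHom_id
  have hval : ∀ w : V, (h w).1 = w := fun w => by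
    have := congrFun (h1.trans h2.symm) w
    simpa using this
  rcases (h v).2 with hb | ⟨c, hc, hcv⟩
  · exact absurd ((hval v) ▸ hb) hv
  · exact ⟨c, hc, cause_ne_bot hc, hcv.trans (le_of_eq (hval v))⟩

end Aux2

section Aux3

lemma chain_exists_lb {α : Type} [Preorder α] {c : Set α} (hc : IsChain (· ≤ ·) c)
    (hne : c.Nonempty) {s : Set α} (hs : s.Finite) (hsc : s ⊆ c) :
    ∃ m ∈ c, ∀ x ∈ s, m ≤ x := by
  classical
  refine Set.Finite.induction_on
    (motive := fun s _ => s ⊆ c → ∃ m ∈ c, ∀ x ∈ s, m ≤ x) s hs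
    (fun _ => ⟨hne.choose, hne.choose_spec, by simp⟩) ?_ hsc
  rintro a s' ha hs' ih hsub
  obtain ⟨m, hm, hmall⟩ := ih ((Set.subset_insert a s').trans hsub)
  have hac : a ∈ c := hsub (Set.mem_insert a s')
  by_cases h0 : True
  · clear h0
    rcases hc.total hm hac with h | h
    · refine ⟨m, hm, fun x hx => ?_⟩
      rcases Set.mem_insert_iff.mp hx with rfl | hx
      · exact h
      · exact hmall x hx
    · refine ⟨a, hac, fun x hx => ?_⟩
      rcases Set.mem_insert_iff.mp hx with rfl | hx
      · exact le_refl x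
      · exact h.trans (hmall x hx)
  · exact absurd trivial h0

lemma zorn_min {α : Type} [PartialOrder α] (s : Set α)
    (ih : ∀ c ⊆ s, IsChain (· ≤ ·) c → ∀ y ∈ c, ∃ lb ∈ s, ∀ z ∈ c, lb ≤ z)
    (x : α) (hxs : x ∈ s) :
    ∃ m ∈ s, m ≤ x ∧ ∀ z ∈ s, z ≤ m → z = m := by
  obtain ⟨m, hxm, hmem, hmax⟩ :=
    zorn_le_nonempty₀ (α := αᵒᵈ) s
      (fun c hcs hchain y hy => by
        obtain ⟨lb, hlb, hlball⟩ := ih c hcs hchain.symm y hy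
        exact ⟨lb, hlb, fun z hz => hlball z hz⟩) x hxs
  refine ⟨m, hmem, hxm, fun z hz hzm => le_antisymm hzm (hmax hz hzm)⟩

variable {Lb V : Type} {At : Set Lb} [CompletelyDistribLattice V] [CausalOps Lb V]

/-- The left-hand side term of the satisfaction condition. -/
noncomputable def headTerm (I : ↥At → V) (r : LRule Lb At) (a : ↥At) : V :=
  capp Lb (capp Lb (bodyVal I r) (clabel Lb V r.lbl)) (clabel Lb V (a : Lb))

lemma satisfies_pos_iff {r : LRule Lb At} (hr : r.isPositive) (I : ↥At → V) :
    Satisfies I r ↔ ∃ a ∈ r.hposA, headTerm I r a ≤ I a := by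
  unfold Satisfies headTerm
  have h : r.hnegA = (∅ : Set ↥At) := by
    ext a; simp [LRule.hnegA, hr.1]
  rw [h]
  simp

lemma bodyVal_pos {r : LRule Lb At} (hr : r.isPositive) (I : ↥At → V) :
    bodyVal I r = ⨅ a ∈ r.bposA, I a := by
  have h : r.bnegA = (∅ : Set ↥At) := by
    ext a; simp [LRule.bnegA, hr.2]
  rw [bodyVal, h]
  simp

lemma headTerm_mono [CausalAlgebra Lb V] {r : LRule Lb At} (hr : r.isPositive)
    {I I' : ↥At → V} (h : ∀ a, I a ≤ I' a) (a : ↥At) :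
    headTerm I r a ≤ headTerm I' r a := by
  refine capp_mono_left (capp_mono_left ?_ _) _
  rw [bodyVal_pos hr, bodyVal_pos hr]
  exact iInf_mono fun b => iInf_mono fun _ => h b

lemma headTerm_ne_bot [IsValueAlgebra Lb V] {r : LRule Lb At} (hr : r.isPositive)
    {I : ↥At → V} (hb : ∀ b ∈ r.bposA, I b ≠ ⊥) (a : ↥At) :
    headTerm I r a ≠ ⊥ := by
  haveI : CausalAlgebra Lb V := IsValueAlgebra.alg
  classical
  have hco : ∀ b : ↥At, b ∈ r.bposA → ∃ c : V, IsCause Lb c ∧ c ≤ I b := fun b hbm => by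
    obtain ⟨c, hc, -, hle⟩ := exists_cause_le (Lb := Lb) (hb b hbm)
    exact ⟨c, hc, hle⟩
  choose! f hf1 hf2 using hco
  have hc0c : IsCause Lb (sInf (f '' r.bposA)) :=
    IsCause.inf _ (by rintro w ⟨b, hbm, rfl⟩; exact hf1 b hbm)
  have hc0le : sInf (f '' r.bposA) ≤ bodyVal I r := by
    rw [bodyVal_pos hr]
    exact le_iInf fun b => le_iInf fun hbm =>
      (sInf_le (Set.mem_image_of_mem f hbm)).trans (hf2 b hbm)
  have hcc : IsCause Lb (capp Lb (capp Lb (sInf (f '' r.bposA)) (clabel Lb V r.lbl))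
      (clabel Lb V (a : Lb))) :=
    IsCause.app _ _ (IsCause.app _ _ hc0c (IsCause.label _)) (IsCause.label _)
  have hle : capp Lb (capp Lb (sInf (f '' r.bposA)) (clabel Lb V r.lbl))
      (clabel Lb V (a : Lb)) ≤ headTerm I r a :=
    capp_mono_left (capp_mono_left hc0le _) _
  intro h0
  exact cause_ne_bot hcc (le_bot_iff.mp (h0 ▸ hle))

lemma atomsOf_mono {I I' : ↥At → V} (h : ∀ a, I a ≤ I' a) : AtomsOf I ⊆ AtomsOf I' :=
  fun a ha hb => ha (le_bot_iff.mp (hb ▸ h a))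

lemma isStandard_Ist (I : ↥At → V) : IsStandard (Ist I) := fun a => by
  unfold Ist; split <;> simp

lemma atomsOf_Ist [IsValueAlgebra Lb V] (I : ↥At → V) : AtomsOf (Ist I) = AtomsOf I := by
  have tne : (⊤ : V) ≠ ⊥ := fun hh => vbot_ne_top (Lb := Lb) (V := V) hh.symm
  ext a
  unfold AtomsOf Ist
  by_cases h : I a = ⊥ <;> simp [h, tne]

lemma std_ext [IsValueAlgebra Lb V] {K K' : ↥At → V} (hK : IsStandard K) (hK' : IsStandard K')
    (h : AtomsOf K = AtomsOf K') : K = K' := by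
  have tne : (⊤ : V) ≠ ⊥ := fun hh => vbot_ne_top (Lb := Lb) (V := V) hh.symm
  funext a
  have hiff : K a ≠ ⊥ ↔ K' a ≠ ⊥ := Set.ext_iff.mp h a
  rcases hK a with h1 | h1 <;> rcases hK' a with h2 | h2
  · rw [h1, h2]
  · exact absurd h1 (hiff.mpr (by rw [h2]; exact tne))
  · exact absurd h2 (hiff.mp (by rw [h1]; exact tne))
  · rw [h1, h2]

lemma Ist_models [IsValueAlgebra Lb V] {P : Set (LRule Lb At)} (hP : PositiveProg P)
    {I : ↥At → V} (hI : Models I P) : Models (Ist I) P := by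
  haveI : CausalAlgebra Lb V := IsValueAlgebra.alg
  intro r hr
  obtain ⟨a, ha, hw⟩ := (satisfies_pos_iff (hP r hr) I).1 (hI r hr)
  refine (satisfies_pos_iff (hP r hr) (Ist I)).2 ⟨a, ha, ?_⟩
  by_cases hIa : I a = ⊥
  · by_cases hall : ∀ b ∈ r.bposA, I b ≠ ⊥
    · exact absurd (le_bot_iff.mp (hIa ▸ hw)) (headTerm_ne_bot (hP r hr) hall a)
    · push_neg at hall
      obtain ⟨b, hbm, hIb⟩ := hall
      have h1 : bodyVal (Ist I) r = ⊥ := by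
        refine le_bot_iff.mp ?_
        rw [bodyVal_pos (hP r hr)]
        refine (iInf₂_le b hbm).trans ?_
        simp [Ist, hIb]
      unfold headTerm
      rw [h1, CausalAlgebra.bot_capp, CausalAlgebra.bot_capp]
      exact bot_le
  · have h2 : Ist I a = ⊤ := by simp [Ist, hIa]
    rw [h2]; exact le_top

lemma chain_inf_models [IsValueAlgebra Lb V] {P : Set (LRule Lb At)} (hP : PositiveProg P)
    {c : Set (↥At → V)} (hchain : IsChain (· ≤ ·) c) (hne : c.Nonempty)
    (hmods : ∀ I ∈ c, Models I P) :
    Models (fun a => ⨅ I ∈ c, I a) P := by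
  haveI : CausalAlgebra Lb V := IsValueAlgebra.alg
  classical
  intro r hrP
  have hrpos := hP r hrP
  have hwit : ∃ a ∈ r.hposA, ∀ I ∈ c, ∃ I' ∈ c, I' ≤ I ∧ headTerm I' r a ≤ I' a := by
    by_contra hno
    push_neg at hno
    choose! g hg1 hg2 using hno
    have hfin : (g '' r.hposA).Finite := by
      have hfin0 : (r.hposA : Set ↥At).Finite :=
        Set.Finite.preimage (Set.injOn_of_injective Subtype.val_injective)
          r.hpos.finite_toSet
      exact hfin0.image g
    have hsub : g '' r.hposA ⊆ c := by rintro w ⟨a, ha, rfl⟩; exact hg1 a ha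
    obtain ⟨m, hmc, hml⟩ := chain_exists_lb hchain hne hfin hsub
    obtain ⟨a, ha, hwa⟩ := (satisfies_pos_iff hrpos m).1 (hmods m hmc r hrP)
    exact hg2 a ha m hmc (hml _ (Set.mem_image_of_mem g ha)) hwa
  obtain ⟨a, ha, hco⟩ := hwit
  refine (satisfies_pos_iff hrpos _).2 ⟨a, ha, ?_⟩
  refine le_iInf fun I => le_iInf fun hI => ?_
  obtain ⟨I', hI', hle, hw⟩ := hco I hI
  have hmono : headTerm (fun a' => ⨅ I ∈ c, I a') r a ≤ headTerm I' r a :=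
    headTerm_mono hrpos (fun b => iInf₂_le I' hI') a
  exact (hmono.trans hw).trans (hle a)

end Aux3

/-- Theorem 3: for a positive program `P`, a standard interpretation `J` is a standard
stable model of `P` iff there is a causal stable model `I` of `P` with `I^st = J`. -/
theorem standard_stable_iff_causal_stable_positive (Lb V : Type) (At : Set Lb)
    [CompletelyDistribLattice V] [CausalOps Lb V] [IsValueAlgebra Lb V]
    (P : Set (LRule Lb At)) (hP : PositiveProg P)
    (J : ↥At → V) (hJ : IsStandard J) :
    StdStablePos P J ↔ ∃ I : ↥At → V, CausalStablePos P I ∧ Ist I = J := by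
  haveI : CausalAlgebra Lb V := IsValueAlgebra.alg
  classical
  constructor
  · rintro ⟨hJstd, hJmods, hJmin⟩
    set M : Set (↥At → V) := {I | Models I P ∧ AtomsOf I ⊆ AtomsOf J} with hM
    have hJM : J ∈ M := ⟨hJmods, subset_rfl⟩
    obtain ⟨I0, hI0M, hI0J, hI0min⟩ := zorn_min M
      (fun c hcM hchain y hy => by
        refine ⟨fun a => ⨅ I ∈ c, I a,
          ⟨chain_inf_models hP hchain ⟨y, hy⟩ (fun I hI => (hcM hI).1), ?_⟩, ?_⟩
        · exact subset_trans (atomsOf_mono (fun a => iInf₂_le y hy)) (hcM hy).2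
        · exact fun z hz a => iInf₂_le z hz) J hJM
    have hIsub : AtomsOf I0 ⊆ AtomsOf J := hI0M.2
    have hat : AtomsOf (Ist I0) = AtomsOf I0 := atomsOf_Ist I0
    have hIstIJ : Ist I0 = J := by
      rcases eq_or_ne (AtomsOf (Ist I0)) (AtomsOf J) with heq | hne0
      · exact std_ext (isStandard_Ist I0) hJstd heq
      · exact hJmin _ (isStandard_Ist I0) (Ist_models hP hI0M.1)
          (Or.inr (Set.ssubset_iff_subset_ne.mpr ⟨by rw [hat]; exact hIsub, hne0⟩))
    refine ⟨I0, ⟨hI0M.1, ?_⟩, hIstIJ⟩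
    intro I' hI'm hwle
    have hJat : AtomsOf J = AtomsOf I0 := by rw [← hIstIJ, hat]
    rcases hwle with hle | hss
    · exact hI0min I' ⟨hI'm, (atomsOf_mono hle).trans hIsub⟩ hle
    · exfalso
      have h1 : Ist I' = J := hJmin _ (isStandard_Ist I') (Ist_models hP hI'm)
        (Or.inr (by rw [atomsOf_Ist, hJat]; exact hss))
      have h3 : AtomsOf I' = AtomsOf I0 := by rw [← atomsOf_Ist I', h1, hJat]
      exact hss.ne h3
  · rintro ⟨I, ⟨hImods, hImin⟩, rfl⟩
    refine ⟨isStandard_Ist I, Ist_models hP hImods, ?_⟩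
    intro K hKstd hKmods hKle
    have hat : AtomsOf (Ist I) = AtomsOf I := atomsOf_Ist I
    have hsub : AtomsOf K ⊆ AtomsOf (Ist I) := by
      rcases hKle with hle | hss
      · exact atomsOf_mono hle
      · exact hss.subset
    rcases eq_or_ne (AtomsOf K) (AtomsOf (Ist I)) with heq | hne0
    · exact std_ext hKstd (isStandard_Ist I) heq
    · exfalso
      have hss : AtomsOf K ⊂ AtomsOf I := by
        rw [← hat]; exact Set.ssubset_iff_subset_ne.mpr ⟨hsub, hne0⟩
      have hKI : K = I := hImin K hKmods (Or.inr hss)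
      exact hss.ne (by rw [hKI])


end Causal
end
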